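/- arXiv:2601.06715 — 4 statements merged into one kernel-verified Lean document; each statement's English description precedes it below -/
import Mathlib

section
/- Let p_0 be any probability density on ℝ^d, t > 0, n ≥ 1, and x ∈ ℝ^d. Then E[‖∇\hat p_t(x) − ∇p_t(x)‖²] ≤ p_t(x) / (n t (2πt)^{d/2}), where the expectation is over the n i.i.d. samples and ∇p_t(x) = ((∇φ_t) * p_0)(x) = ∫ ((y − x)/t) φ_t(x − y) p_0(y) dy. -/
open MeasureTheory Real
open scoped BigOperators ENNReal

noncomputable section

/-- Euclidean space ℝ^d. -/
abbrev Euc (d : ℕ) : Type := EuclideanSpace ℝ (Fin d)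

/-- The centered Gaussian density `φ_t(x) = (2πt)^{-d/2} exp(−‖x‖²/(2t))` on ℝ^d. -/
def gaussianKernel (d : ℕ) (t : ℝ) (x : Euc d) : ℝ :=
  (2 * π * t) ^ (-(d : ℝ) / 2) * Real.exp (-‖x‖ ^ 2 / (2 * t))

/-- `p0` is a probability density on ℝ^d. -/
def IsProbDensity {d : ℕ} (p0 : Euc d → ℝ) : Prop :=
  Measurable p0 ∧ (∀ x, 0 ≤ p0 x) ∧ (∫ x, p0 x) = 1

/-- The Gaussian-smoothed density `p_t = p_0 * φ_t`. -/
def pt (d : ℕ) (p0 : Euc d → ℝ) (t : ℝ) (x : Euc d) : ℝ :=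
  ∫ y, p0 y * gaussianKernel d t (x - y)

/-- Gradient of `p_t`: `∇p_t(x) = ((∇φ_t) * p_0)(x) = ∫ ((y−x)/t) φ_t(x−y) p_0(y) dy`. -/
def ptGrad (d : ℕ) (p0 : Euc d → ℝ) (t : ℝ) (x : Euc d) : Euc d :=
  ∫ y, (t⁻¹ * (gaussianKernel d t (x - y) * p0 y)) • (y - x)

/-- Score `s_t(x) = ∇ log p_t(x) = ∇p_t(x)/p_t(x)`. -/
def scoreFn (d : ℕ) (p0 : Euc d → ℝ) (t : ℝ) (x : Euc d) : Euc d :=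
  (pt d p0 t x)⁻¹ • ptGrad d p0 t x

/-- Joint law of `n` i.i.d. samples drawn from the density `p0`. -/
def sampleMeasure (d n : ℕ) (p0 : Euc d → ℝ) : Measure (Fin n → Euc d) :=
  Measure.pi fun _ => (volume : Measure (Euc d)).withDensity fun x => ENNReal.ofReal (p0 x)

/-- Gaussian kernel density estimator `\hat p_t(x) = (1/n) Σ_i φ_t(x − X_i)`. -/
def kde (d n : ℕ) (t : ℝ) (X : Fin n → Euc d) (x : Euc d) : ℝ :=
  (n : ℝ)⁻¹ * ∑ i, gaussianKernel d t (x - X i)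

/-- Gradient of the Gaussian KDE: `∇\hat p_t(x) = (1/(nt)) Σ_i (X_i − x) φ_t(x − X_i)`. -/
def kdeGrad (d n : ℕ) (t : ℝ) (X : Fin n → Euc d) (x : Euc d) : Euc d :=
  ((n : ℝ) * t)⁻¹ • ∑ i, gaussianKernel d t (x - X i) • (X i - x)

/-- Threshold `ρ_n = log n / (n (2πt)^{d/2})`. -/
def rhoThresh (d n : ℕ) (t : ℝ) : ℝ :=
  Real.log n / ((n : ℝ) * (2 * π * t) ^ ((d : ℝ) / 2))

/-- Thresholded score estimator `\hat s_t = (∇\hat p_t/\hat p_t) 1{\hat p_t ≥ ρ_n}`. -/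
def hatScore (d n : ℕ) (t : ℝ) (X : Fin n → Euc d) (x : Euc d) : Euc d :=
  if rhoThresh d n t ≤ kde d n t X x then (kde d n t X x)⁻¹ • kdeGrad d n t X x else 0

/-- Total variation distance between densities: `TV(f,g) = (1/2)∫|f−g|`. -/
def tvDist (d : ℕ) (f g : Euc d → ℝ) : ℝ := (1 / 2) * ∫ x, |f x - g x|

/-- Fourier transform `F[f](ω) = ∫ f(x) e^{−i⟨ω,x⟩} dx`. -/
def fourierTf (d : ℕ) (f : Euc d → ℝ) (ω : Euc d) : ℂ :=
  ∫ x, (f x : ℂ) * Complex.exp (-(Complex.I * ((inner ℝ ω x : ℝ) : ℂ)))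

/-- Sobolev assumption with smoothness β and radius L:
`∫ ‖ω‖^{2β} |F[p_0](ω)|² dω ≤ (2π)^d L²`. -/
def SobolevClass (d : ℕ) (β L : ℝ) (p0 : Euc d → ℝ) : Prop :=
  (∫ ω : Euc d, ‖ω‖ ^ (2 * β) * ‖fourierTf d p0 ω‖ ^ 2) ≤ (2 * π) ^ d * L ^ 2

/-- Polynomial tail assumption: `p_0(x) ≤ C₂ (1 + ‖x‖²)^{-(1+γ+d)/2}`. -/
def PolyTail (d : ℕ) (γ C2 : ℝ) (p0 : Euc d → ℝ) : Prop :=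
  ∀ x : Euc d, p0 x ≤ C2 * (1 + ‖x‖ ^ 2) ^ (-(1 + γ + (d : ℝ)) / 2)

/-- Exponential tail assumption: `p_0(x) ≤ C₁ exp(−c₁‖x‖^γ)`. -/
def ExpTail (d : ℕ) (γ c1 C1 : ℝ) (p0 : Euc d → ℝ) : Prop :=
  ∀ x : Euc d, p0 x ≤ C1 * Real.exp (-(c1 * ‖x‖ ^ γ))

/-- General kernel density estimator `\hat f_h(y) = (1/(n h^d)) Σ_i K((y − X_i)/h)`. -/
def kdeK (d n : ℕ) (K : Euc d → ℝ) (h : ℝ) (X : Fin n → Euc d) (y : Euc d) : ℝ :=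
  ((n : ℝ) * h ^ d)⁻¹ * ∑ i, K (h⁻¹ • (y - X i))

/-- Smoothed kernel estimator `\hat p_t = \hat f_h * φ_t`. -/
def hatptK (d n : ℕ) (K : Euc d → ℝ) (h t : ℝ) (X : Fin n → Euc d) (x : Euc d) : ℝ :=
  ∫ y, kdeK d n K h X y * gaussianKernel d t (x - y)

/-- Local sup of `p_t`: `p_t^*(x) = sup{ p_t(y) : ‖y − x‖_∞ ≤ h }`. -/
def ptStar (d : ℕ) (p0 : Euc d → ℝ) (t h : ℝ) (x : Euc d) : ℝ :=
  sSup ((fun y => pt d p0 t y) '' {y : Euc d | ∀ i, |y i - x i| ≤ h})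


section helpers

variable {ι : Type*} [Fintype ι] [DecidableEq ι] {α : Type*} [MeasurableSpace α]
  (μ : Measure α) [IsProbabilityMeasure μ]

lemma pi_map_eval (i : ι) :
    MeasurePreserving (fun ω : ι → α => ω i) (Measure.pi (fun _ : ι => μ)) μ := by
  refine ⟨measurable_pi_apply i, ?_⟩
  ext s hs
  rw [Measure.map_apply (measurable_pi_apply i) hs,
    show (fun ω : ι → α => ω i) ⁻¹' s
      = Set.pi Set.univ (Function.update (fun _ => Set.univ) i s) from Set.eval_preimage,
    Measure.pi_pi]
  rw [Finset.prod_eq_single i (fun j _ hj => by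
    rw [Function.update_of_ne hj]; exact measure_univ) (fun h => absurd (Finset.mem_univ i) h)]
  rw [Function.update_self]

lemma pi_map_pair {i j : ι} (hij : i ≠ j) :
    MeasurePreserving (fun ω : ι → α => (ω i, ω j)) (Measure.pi (fun _ : ι => μ)) (μ.prod μ) := by
  have hm : Measurable (fun ω : ι → α => (ω i, ω j)) :=
    (measurable_pi_apply i).prodMk (measurable_pi_apply j)
  refine ⟨hm, ?_⟩
  refine (Measure.prod_eq fun s t hs ht => ?_).symm
  rw [Measure.map_apply hm (hs.prod ht)]
  have hpre : (fun ω : ι → α => (ω i, ω j)) ⁻¹' (s ×ˢ t)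
      = Set.pi Set.univ (fun k => if k = i then s else if k = j then t else Set.univ) := by
    ext ω
    simp only [Set.mem_preimage, Set.mem_prod, Set.mem_pi, Set.mem_univ, forall_true_left]
    constructor
    · rintro ⟨h1, h2⟩ k
      split_ifs with hki hkj
      · subst hki; exact h1
      · subst hkj; exact h2
      · trivial
    · intro h
      refine ⟨?_, ?_⟩
      · have := h i; simpa using this
      · have := h j; simp only [if_neg hij.symm, if_pos rfl] at this; exact this
  rw [hpre, Measure.pi_pi]
  have hterm : ∀ k : ι, μ (if k = i then s else if k = j then t else Set.univ)
      = (if k = i then μ s else 1) * (if k = j then μ t else 1) := by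
    intro k
    split_ifs with hki hkj
    · exact absurd (hki ▸ hkj : i = j) hij
    · rw [mul_one]
    · rw [one_mul]
    · rw [measure_univ, mul_one]
  simp_rw [hterm]
  rw [Finset.prod_mul_distrib, Finset.prod_ite_eq' Finset.univ i (fun _ => μ s),
    Finset.prod_ite_eq' Finset.univ j (fun _ => μ t), if_pos (Finset.mem_univ i),
    if_pos (Finset.mem_univ j)]

end helpers

set_option maxHeartbeats 2000000 in
/-- MSE bound for the gradient of the Gaussian KDE:
`E[‖∇\hat p_t(x) − ∇p_t(x)‖²] ≤ p_t(x) / (n t (2πt)^{d/2})`. -/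
theorem stmt1 (d n : ℕ) (hd : 1 ≤ d) (hn : 1 ≤ n) (t : ℝ) (ht : 0 < t)
    (p0 : Euc d → ℝ) (hp0 : IsProbDensity p0) (x : Euc d) :
    (∫ X, ‖kdeGrad d n t X x - ptGrad d p0 t x‖ ^ 2 ∂sampleMeasure d n p0)
      ≤ pt d p0 t x / ((n : ℝ) * t * (2 * π * t) ^ ((d : ℝ) / 2)) := by
  obtain ⟨hm0, hpos, hint1⟩ := hp0
  have hnpos : (0:ℝ) < n := by exact_mod_cast hn
  have h2πt : (0:ℝ) < 2 * π * t := by positivity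
  set c : ℝ := (2 * π * t) ^ (-(d:ℝ)/2) with hc
  have hcpos : 0 < c := Real.rpow_pos_of_pos h2πt _
  have hgnn : ∀ z : Euc d, 0 ≤ gaussianKernel d t z := fun z => by
    unfold gaussianKernel; positivity
  have hgle : ∀ z : Euc d, gaussianKernel d t z ≤ c := fun z => by
    unfold gaussianKernel
    calc (2 * π * t) ^ (-(d:ℝ)/2) * Real.exp (-‖z‖ ^ 2 / (2 * t))
        ≤ (2 * π * t) ^ (-(d:ℝ)/2) * 1 := by
          apply mul_le_mul_of_nonneg_left _ hcpos.le
          rw [Real.exp_le_one_iff]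
          have h1 : (0:ℝ) ≤ ‖z‖^2 := by positivity
          have h2t : (0:ℝ) < 2*t := by positivity
          exact div_nonpos_of_nonpos_of_nonneg (by linarith) h2t.le
      _ = c := by rw [mul_one]
  have hgcont : Continuous (gaussianKernel d t) := by
    unfold gaussianKernel
    exact continuous_const.mul (Real.continuous_exp.comp ((continuous_norm.pow 2).neg.div_const _))
  have key : ∀ u : ℝ, 0 ≤ u → u * Real.exp (-u / (2*t)) ≤ t := by
    intro u hu
    have h1 := Real.add_one_le_exp (u/(4*t))
    have h2 : Real.exp (u/(2*t)) = Real.exp (u/(4*t)) * Real.exp (u/(4*t)) := by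
      rw [← Real.exp_add]; ring_nf
    have h3 : u ≤ t * Real.exp (u/(2*t)) := by
      set s := u/(4*t) with hs
      have hs0 : 0 ≤ s := by positivity
      have hu4 : u = 4*t*s := by rw [hs]; field_simp
      have hsq : (s+1)*(s+1) ≤ Real.exp s * Real.exp s :=
        mul_le_mul (by linarith [h1]) (by linarith [h1]) (by linarith) (Real.exp_pos s).le
      rw [h2, hu4]
      nlinarith [mul_le_mul_of_nonneg_left hsq ht.le, mul_nonneg ht.le (sq_nonneg (s-1))]
    have h4 : -u/(2*t) = -(u/(2*t)) := by ring
    rw [h4, Real.exp_neg, ← div_eq_mul_inv, div_le_iff₀ (Real.exp_pos _)]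
    exact h3
  set ν : Measure (Euc d) :=
    (volume : Measure (Euc d)).withDensity (fun y => ENNReal.ofReal (p0 y)) with hν
  have hIntp0 : Integrable p0 := by
    by_contra h
    rw [integral_undef h] at hint1
    norm_num at hint1
  haveI : IsProbabilityMeasure ν := by
    constructor
    rw [hν, withDensity_apply _ MeasurableSet.univ, Measure.restrict_univ,
      ← ofReal_integral_eq_lintegral_ofReal hIntp0 (Filter.Eventually.of_forall hpos),
      hint1, ENNReal.ofReal_one]
  haveI : IsProbabilityMeasure (Measure.pi (fun _ : Fin n => ν)) := by infer_instance
  set Y : Euc d → Euc d := fun y => (t⁻¹ * gaussianKernel d t (x - y)) • (y - x) with hY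
  have hYcont : Continuous Y := by
    refine Continuous.smul (f := fun y => t⁻¹ * gaussianKernel d t (x - y)) (g := fun y => y - x) ?_ ?_
    · exact continuous_const.mul (hgcont.comp (continuous_const.sub continuous_id))
    · exact continuous_id.sub continuous_const
  have hYsq : ∀ y, ‖Y y‖^2 ≤ t⁻¹ * c * gaussianKernel d t (x - y) := by
    intro y
    have hzx : ‖y - x‖ = ‖x - y‖ := norm_sub_rev _ _
    have hnorm : ‖Y y‖ = t⁻¹ * gaussianKernel d t (x - y) * ‖x - y‖ := by
      rw [hY]
      simp only [norm_smul, Real.norm_eq_abs, hzx]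
      rw [abs_of_nonneg (mul_nonneg (by positivity) (hgnn _))]
    have key2 : gaussianKernel d t (x - y) * ‖x - y‖^2 ≤ c * t := by
      have hk := key (‖x - y‖^2) (by positivity)
      unfold gaussianKernel
      calc (2 * π * t) ^ (-(d:ℝ)/2) * Real.exp (-‖x - y‖ ^ 2 / (2 * t)) * ‖x - y‖^2
          = c * (‖x - y‖^2 * Real.exp (-‖x - y‖^2 / (2*t))) := by rw [hc]; ring
        _ ≤ c * t := mul_le_mul_of_nonneg_left hk hcpos.le
    calc ‖Y y‖^2
        = (t⁻¹ * t⁻¹ * gaussianKernel d t (x - y))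
            * (gaussianKernel d t (x - y) * ‖x - y‖^2) := by rw [hnorm]; ring
      _ ≤ (t⁻¹ * t⁻¹ * gaussianKernel d t (x - y)) * (c * t) := by
          apply mul_le_mul_of_nonneg_left key2
          exact mul_nonneg (by positivity) (hgnn _)
      _ = t⁻¹ * c * gaussianKernel d t (x - y) := by field_simp
  set B : ℝ := 1 + t⁻¹ * c * c with hB
  have hYle : ∀ y, ‖Y y‖ ≤ B := by
    intro y
    have h1 : ‖Y y‖^2 ≤ t⁻¹ * c * c := by
      refine (hYsq y).trans ?_
      exact mul_le_mul_of_nonneg_left (hgle _) (by positivity)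
    rw [hB]
    nlinarith [norm_nonneg (Y y), sq_nonneg (‖Y y‖ - 1)]
  have hYint : Integrable Y ν :=
    (integrable_const B).mono' hYcont.aestronglyMeasurable (Filter.Eventually.of_forall hYle)
  set μ : Euc d := ptGrad d p0 t x with hμdef
  have hmean : ∫ y, Y y ∂ν = μ := by
    rw [hν]
    have hrfl : (fun y => ENNReal.ofReal (p0 y))
        = (fun y => ((Real.toNNReal (p0 y) : NNReal) : ℝ≥0∞)) := rfl
    rw [hrfl, integral_withDensity_eq_integral_smul hm0.real_toNNReal]
    rw [hμdef]
    unfold ptGrad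
    congr 1
    funext y
    rw [NNReal.smul_def, Real.coe_toNNReal _ (hpos y), hY]
    rw [smul_smul]
    ring_nf
  set Z : Euc d → Euc d := fun y => Y y - μ with hZ
  have hZcont : Continuous Z := hYcont.sub continuous_const
  set B' : ℝ := B + ‖μ‖ with hB'
  have hZle : ∀ y, ‖Z y‖ ≤ B' := fun y =>
    (norm_sub_le _ _).trans (add_le_add_left (hYle y) _)
  have hZint : Integrable Z ν := hYint.sub (integrable_const μ)
  have hZmean : ∫ y, Z y ∂ν = 0 := by
    rw [hZ]
    rw [integral_sub hYint (integrable_const μ), hmean, integral_const]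
    simp
  have hdiff : ∀ X : Fin n → Euc d,
      kdeGrad d n t X x - ptGrad d p0 t x = (n:ℝ)⁻¹ • ∑ i, Z (X i) := by
    intro X
    simp only [hZ, hY]
    rw [Finset.sum_sub_distrib, smul_sub, Finset.sum_const, Finset.card_univ, Fintype.card_fin]
    congr 1
    · unfold kdeGrad
      rw [Finset.smul_sum, Finset.smul_sum]
      congr 1
      funext i
      rw [smul_smul, mul_inv, mul_assoc, ← smul_smul]
    · rw [← Nat.cast_smul_eq_nsmul ℝ, smul_smul, inv_mul_cancel₀ (ne_of_gt hnpos), one_smul]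
  have hsm : sampleMeasure d n p0 = Measure.pi (fun _ : Fin n => ν) := rfl
  have hterm_cont : ∀ i j : Fin n,
      Continuous (fun X : Fin n → Euc d => (inner ℝ (Z (X i)) (Z (X j)) : ℝ)) := by
    intro i j
    exact Continuous.inner (hZcont.comp (continuous_apply i)) (hZcont.comp (continuous_apply j))
  have hterm_int : ∀ i j : Fin n,
      Integrable (fun X : Fin n → Euc d => (inner ℝ (Z (X i)) (Z (X j)) : ℝ))
        (Measure.pi (fun _ : Fin n => ν)) := by
    intro i j
    refine (integrable_const (B' * B')).mono' (hterm_cont i j).aestronglyMeasurable ?_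
    refine Filter.Eventually.of_forall fun X => ?_
    calc ‖(inner ℝ (Z (X i)) (Z (X j)) : ℝ)‖ ≤ ‖Z (X i)‖ * ‖Z (X j)‖ := norm_inner_le_norm _ _
      _ ≤ B' * B' := mul_le_mul (hZle _) (hZle _) (norm_nonneg _)
          ((norm_nonneg _).trans (hZle (X i)))
  set V : ℝ := ∫ y, ‖Z y‖^2 ∂ν with hV
  have hmain : (∫ X, ‖kdeGrad d n t X x - ptGrad d p0 t x‖ ^ 2 ∂sampleMeasure d n p0)
      = (n:ℝ)⁻¹ * V := by
    rw [hsm]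
    have hexp : ∀ X : Fin n → Euc d,
        ‖kdeGrad d n t X x - ptGrad d p0 t x‖ ^ 2
          = ((n:ℝ)⁻¹)^2 * ∑ i, ∑ j, (inner ℝ (Z (X i)) (Z (X j)) : ℝ) := by
      intro X
      rw [hdiff X, norm_smul, mul_pow]
      congr 1
      · rw [Real.norm_eq_abs, sq_abs]
      · rw [← real_inner_self_eq_norm_sq, sum_inner]
        congr 1
        funext i
        rw [inner_sum]
    simp_rw [hexp]
    rw [integral_const_mul, integral_finset_sum _ (fun i _ => integrable_finset_sum _
      (fun j _ => hterm_int i j))]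
    have hswap : ∀ i : Fin n, (∫ X : Fin n → Euc d,
        ∑ j, (inner ℝ (Z (X i)) (Z (X j)) : ℝ) ∂Measure.pi (fun _ => ν))
        = ∑ j, ∫ X : Fin n → Euc d,
            (inner ℝ (Z (X i)) (Z (X j)) : ℝ) ∂Measure.pi (fun _ => ν) :=
      fun i => integral_finset_sum _ (fun j _ => hterm_int i j)
    simp_rw [hswap]
    have hcont2 : Continuous (fun q : Euc d × Euc d => (inner ℝ (Z q.1) (Z q.2) : ℝ)) :=
      Continuous.inner (hZcont.comp continuous_fst) (hZcont.comp continuous_snd)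
    have hij : ∀ i j : Fin n, (∫ X : Fin n → Euc d,
        (inner ℝ (Z (X i)) (Z (X j)) : ℝ) ∂Measure.pi (fun _ => ν)) = if i = j then V else 0 := by
      intro i j
      by_cases h : i = j
      · subst h
        rw [if_pos rfl, hV]
        have hmapeq := (pi_map_eval (ι := Fin n) ν i).map_eq
        have hsm2 : AEStronglyMeasurable (fun y : Euc d => ‖Z y‖^2)
            ((Measure.pi (fun _ : Fin n => ν)).map (fun ω : Fin n → Euc d => ω i)) := by
          rw [hmapeq]
          exact ((continuous_pow 2).comp (continuous_norm.comp hZcont)).aestronglyMeasurable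
        have h2 := integral_map (f := fun y : Euc d => ‖Z y‖^2)
          ((measurable_pi_apply i : Measurable fun ω : Fin n → Euc d => ω i)).aemeasurable hsm2
        rw [hmapeq] at h2
        calc (∫ X : Fin n → Euc d, (inner ℝ (Z (X i)) (Z (X i)) : ℝ) ∂Measure.pi (fun _ => ν))
            = ∫ X : Fin n → Euc d, ‖Z (X i)‖^2 ∂Measure.pi (fun _ => ν) := by
              refine integral_congr_ae (Filter.Eventually.of_forall fun X => ?_)
              exact real_inner_self_eq_norm_sq _
          _ = ∫ y, ‖Z y‖^2 ∂ν := h2.symm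
      · rw [if_neg h]
        have hmp := pi_map_pair (ι := Fin n) ν h
        have hsm2 : AEStronglyMeasurable (fun q : Euc d × Euc d => (inner ℝ (Z q.1) (Z q.2) : ℝ))
            ((Measure.pi (fun _ : Fin n => ν)).map (fun ω => (ω i, ω j))) := by
          rw [hmp.map_eq]
          exact hcont2.aestronglyMeasurable
        have h2 := integral_map (f := fun q : Euc d × Euc d => (inner ℝ (Z q.1) (Z q.2) : ℝ))
          hmp.measurable.aemeasurable hsm2
        rw [hmp.map_eq] at h2
        have hint2 : Integrable (fun q : Euc d × Euc d => (inner ℝ (Z q.1) (Z q.2) : ℝ))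
            (ν.prod ν) := by
          refine (integrable_const (B' * B')).mono' hcont2.aestronglyMeasurable ?_
          refine Filter.Eventually.of_forall fun q => ?_
          calc ‖(inner ℝ (Z q.1) (Z q.2) : ℝ)‖ ≤ ‖Z q.1‖ * ‖Z q.2‖ := norm_inner_le_norm _ _
            _ ≤ B' * B' := mul_le_mul (hZle _) (hZle _) (norm_nonneg _)
                ((norm_nonneg _).trans (hZle q.1))
        calc (∫ X : Fin n → Euc d, (inner ℝ (Z (X i)) (Z (X j)) : ℝ) ∂Measure.pi (fun _ => ν))
            = ∫ q, (inner ℝ (Z q.1) (Z q.2) : ℝ) ∂(ν.prod ν) := h2.symm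
          _ = ∫ a, (∫ b, (inner ℝ (Z a) (Z b) : ℝ) ∂ν) ∂ν := MeasureTheory.integral_prod _ hint2
          _ = 0 := by
              have hz : ∀ a : Euc d, (∫ b, (inner ℝ (Z a) (Z b) : ℝ) ∂ν) = 0 := by
                intro a
                rw [integral_inner hZint, hZmean, inner_zero_right]
              simp_rw [hz, integral_zero]
    simp_rw [hij]
    simp only [Finset.sum_ite_eq, Finset.mem_univ, if_true, Finset.sum_const,
      Finset.card_univ, Fintype.card_fin, nsmul_eq_mul]
    field_simp
  rw [hmain]
  -- bound V by the second moment
  have hYsqint : Integrable (fun y => ‖Y y‖^2) ν := by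
    refine (integrable_const (B*B)).mono'
      (((continuous_pow 2).comp (continuous_norm.comp hYcont)).aestronglyMeasurable) ?_
    refine Filter.Eventually.of_forall fun y => ?_
    have h1 := hYle y
    have h2 := norm_nonneg (Y y)
    rw [Real.norm_eq_abs, abs_of_nonneg (by positivity)]
    nlinarith
  have hinner_int : Integrable (fun y => (inner ℝ μ (Y y) : ℝ)) ν := hYint.const_inner μ
  have hVle : V ≤ ∫ y, ‖Y y‖^2 ∂ν := by
    have hVeq : V = (∫ y, ‖Y y‖^2 ∂ν) - ‖μ‖^2 := by
      rw [hV]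
      have hptw : (fun y => ‖Z y‖^2)
          = fun y => ‖Y y‖^2 - 2 * (inner ℝ μ (Y y) : ℝ) + ‖μ‖^2 := by
        funext y
        rw [hZ]
        rw [norm_sub_sq_real, real_inner_comm]
      rw [hptw]
      have hf3 : Integrable (fun y => 2 * (inner ℝ μ (Y y) : ℝ)) ν := hinner_int.const_mul 2
      have hf2 : Integrable (fun y => ‖Y y‖^2 - 2 * (inner ℝ μ (Y y) : ℝ)) ν := hYsqint.sub hf3
      rw [integral_add hf2 (integrable_const _),
        integral_sub hYsqint hf3, integral_const_mul,
        integral_inner hYint, hmean, real_inner_self_eq_norm_sq, integral_const]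
      simp only [measure_univ, probReal_univ, ENNReal.toReal_one, smul_eq_mul, one_mul]
      ring
    rw [hVeq]
    nlinarith [sq_nonneg ‖μ‖]
  -- bound the second moment by p_t
  have hgy_meas : Measurable (fun y : Euc d => gaussianKernel d t (x - y)) :=
    (hgcont.comp (continuous_const.sub continuous_id)).measurable
  have hgint : Integrable (fun y => p0 y * gaussianKernel d t (x - y)) := by
    refine (hIntp0.const_mul c).mono' (hm0.mul hgy_meas).aestronglyMeasurable ?_
    refine Filter.Eventually.of_forall fun y => ?_
    rw [Real.norm_eq_abs, abs_of_nonneg (mul_nonneg (hpos y) (hgnn _))]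
    calc p0 y * gaussianKernel d t (x - y) ≤ p0 y * c :=
          mul_le_mul_of_nonneg_left (hgle _) (hpos y)
      _ = c * p0 y := mul_comm _ _
  have hsecond : (∫ y, ‖Y y‖^2 ∂ν) ≤ t⁻¹ * c * pt d p0 t x := by
    have hwd : (∫ y, ‖Y y‖^2 ∂ν) = ∫ y, p0 y * ‖Y y‖^2 := by
      rw [hν]
      have hrfl : (fun y => ENNReal.ofReal (p0 y))
          = (fun y => ((Real.toNNReal (p0 y) : NNReal) : ℝ≥0∞)) := rfl
      rw [hrfl, integral_withDensity_eq_integral_smul hm0.real_toNNReal]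
      congr 1
      funext y
      rw [NNReal.smul_def, Real.coe_toNNReal _ (hpos y), smul_eq_mul]
    rw [hwd]
    have hmono : (∫ y, p0 y * ‖Y y‖^2)
        ≤ ∫ y, (t⁻¹ * c) * (p0 y * gaussianKernel d t (x - y)) := by
      refine integral_mono_of_nonneg ?_ (hgint.const_mul _) ?_
      · exact Filter.Eventually.of_forall fun y => mul_nonneg (hpos y) (by positivity)
      · refine Filter.Eventually.of_forall fun y => ?_
        calc p0 y * ‖Y y‖^2 ≤ p0 y * (t⁻¹ * c * gaussianKernel d t (x - y)) :=
              mul_le_mul_of_nonneg_left (hYsq y) (hpos y)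
          _ = (t⁻¹ * c) * (p0 y * gaussianKernel d t (x - y)) := by ring
    refine hmono.trans ?_
    rw [integral_const_mul]
    unfold pt
    exact le_rfl
  have hfinal : (n:ℝ)⁻¹ * V ≤ (n:ℝ)⁻¹ * (t⁻¹ * c * pt d p0 t x) := by
    apply mul_le_mul_of_nonneg_left _ (inv_nonneg.mpr hnpos.le)
    exact hVle.trans hsecond
  refine hfinal.trans (le_of_eq ?_)
  have hcA : c = ((2 * π * t) ^ ((d:ℝ)/2))⁻¹ := by
    rw [hc, neg_div, Real.rpow_neg h2πt.le]
  rw [hcA]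
  have hA : ((2 * π * t) ^ ((d:ℝ)/2)) ≠ 0 := ne_of_gt (Real.rpow_pos_of_pos h2πt _)
  have hn0 : (n:ℝ) ≠ 0 := ne_of_gt hnpos
  have ht0 : t ≠ 0 := ne_of_gt ht
  field_simp
  try exact Or.inl trivial
end
end

section
/- Suppose p_0 satisfies the polynomial tail assumption with parameters γ, C_2. Then there exists a constant C depending only on γ, d, C_2 such that for every x with ‖x‖ > 1: (i) for every t ∈ (0, 1], p_t(x) ≤ C (1 + ‖x‖²)^{−(1+γ+d)/2}; and (ii) for every t > 1, p_t(x) ≤ C (1 + t^{(1+γ)/2}) (1 + ‖x‖²)^{−(1+γ+d)/2}. -/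
open MeasureTheory Real
open scoped BigOperators ENNReal

noncomputable section

set_option maxHeartbeats 1000000

private lemma gK_nonneg (d : ℕ) {t : ℝ} (ht : 0 < t) (x : Euc d) :
    0 ≤ gaussianKernel d t x := by
  unfold gaussianKernel
  positivity

private lemma integrable_exp_gauss (d : ℕ) {b : ℝ} (hb : 0 < b) :
    Integrable (fun v : Euc d => Real.exp (-b * ‖v‖ ^ 2)) := by
  have h := (GaussianFourier.integrable_cexp_neg_mul_sq_norm_add (V := Euc d) (b := (b : ℂ))
      (by simpa using hb) 0 0).norm
  refine h.congr (Filter.Eventually.of_forall fun v => ?_)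
  simp only [Complex.norm_exp]
  norm_cast
  simp

private lemma integrable_gK (d : ℕ) {t : ℝ} (ht : 0 < t) :
    Integrable (gaussianKernel d t) := by
  have hb : (0:ℝ) < (2 * t)⁻¹ := by positivity
  refine ((integrable_exp_gauss d hb).const_mul ((2 * π * t) ^ (-(d : ℝ) / 2))).congr
    (Filter.Eventually.of_forall fun v => ?_)
  unfold gaussianKernel
  have h : -(2 * t)⁻¹ * ‖v‖ ^ 2 = -‖v‖ ^ 2 / (2 * t) := by ring
  simp only [h]

private lemma integral_gK (d : ℕ) {t : ℝ} (ht : 0 < t) :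
    ∫ y : Euc d, gaussianKernel d t y = 1 := by
  have hb : (0:ℝ) < (2 * t)⁻¹ := by positivity
  have h : ∀ y : Euc d, gaussianKernel d t y
      = (2 * π * t) ^ (-(d : ℝ) / 2) * Real.exp (-(2 * t)⁻¹ * ‖y‖ ^ 2) := by
    intro y
    unfold gaussianKernel
    congr 2
    field_simp
  simp_rw [h]
  rw [MeasureTheory.integral_const_mul, GaussianFourier.integral_rexp_neg_mul_sq_norm hb]
  have hfr : (Module.finrank ℝ (Euc d) : ℝ) = (d : ℝ) := by
    simp [finrank_euclideanSpace]
  rw [hfr]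
  have h2 : π / (2 * t)⁻¹ = 2 * π * t := by
    field_simp
  rw [h2, ← Real.rpow_add (by positivity)]
  have h3 : -(d:ℝ) / 2 + (d:ℝ) / 2 = 0 := by ring
  rw [h3, Real.rpow_zero]

private lemma pow_le_exp_factorial (m : ℕ) {u : ℝ} (hu : 0 ≤ u) :
    u ^ m ≤ (Nat.factorial m : ℝ) * Real.exp u := by
  have h := Real.pow_div_factorial_le_exp (x := u) hu m
  have hm : (0:ℝ) < (Nat.factorial m : ℝ) := by positivity
  calc u ^ m = u ^ m / (Nat.factorial m : ℝ) * (Nat.factorial m : ℝ) := by field_simp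
  _ ≤ Real.exp u * (Nat.factorial m : ℝ) := by gcongr
  _ = (Nat.factorial m : ℝ) * Real.exp u := by ring

private lemma exp_neg_le_rpow (s : ℝ) (hs : 0 ≤ s) {u : ℝ} (hu : 0 < u) :
    Real.exp (-u) ≤ ((Nat.factorial ⌊s⌋₊ : ℝ) + (Nat.factorial (⌊s⌋₊ + 1) : ℝ)) * u ^ (-s) := by
  set m := ⌊s⌋₊ with hm
  have key : u ^ s ≤ ((Nat.factorial m : ℝ) + (Nat.factorial (m+1) : ℝ)) * Real.exp u := by
    have hcase : u ^ s ≤ u ^ m + u ^ (m + 1) := by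
      rcases le_total u 1 with h | h
      · have h1 : u ^ s ≤ u ^ ((m : ℕ) : ℝ) :=
          Real.rpow_le_rpow_of_exponent_ge hu h (Nat.floor_le hs)
        rw [Real.rpow_natCast] at h1
        have h2 : (0:ℝ) ≤ u ^ (m + 1) := pow_nonneg hu.le _
        linarith
      · have hle : s ≤ ((m + 1 : ℕ) : ℝ) := by
          push_cast
          exact (Nat.lt_floor_add_one s).le
        have h1 : u ^ s ≤ u ^ ((m + 1 : ℕ) : ℝ) :=
          Real.rpow_le_rpow_of_exponent_le h hle
        rw [Real.rpow_natCast] at h1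
        have h2 : (0:ℝ) ≤ u ^ m := pow_nonneg hu.le _
        linarith
    calc u ^ s ≤ u ^ m + u ^ (m + 1) := hcase
    _ ≤ (Nat.factorial m : ℝ) * Real.exp u + (Nat.factorial (m+1) : ℝ) * Real.exp u :=
        add_le_add (pow_le_exp_factorial m hu.le) (pow_le_exp_factorial (m + 1) hu.le)
    _ = ((Nat.factorial m : ℝ) + (Nat.factorial (m+1) : ℝ)) * Real.exp u := by ring
  have hus : (0:ℝ) < u ^ s := Real.rpow_pos_of_pos hu s
  rw [Real.exp_neg, Real.rpow_neg hu.le, inv_eq_one_div, ← div_eq_mul_inv,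
    div_le_div_iff₀ (Real.exp_pos u) hus]
  linarith

private lemma div_rpow_neg {A B e : ℝ} (hA : 0 < A) (hB : 0 < B) :
    (A / B) ^ (-e) = A ^ (-e) * B ^ e := by
  rw [Real.div_rpow hA.le hB.le, Real.rpow_neg hB.le]
  field_simp


/-- If `p_0` has polynomial tails, so does `p_t`, uniformly over the stated time ranges. -/
theorem stmt3 (d : ℕ) (hd : 1 ≤ d) (γ C2 : ℝ) (hγ : 0 < γ) (hC2 : 0 < C2) :
    ∃ C > 0, ∀ p0 : Euc d → ℝ, IsProbDensity p0 → PolyTail d γ C2 p0 →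
      ∀ x : Euc d, 1 < ‖x‖ →
        (∀ t : ℝ, 0 < t → t ≤ 1 →
          pt d p0 t x ≤ C * (1 + ‖x‖ ^ 2) ^ (-(1 + γ + (d : ℝ)) / 2)) ∧
        (∀ t : ℝ, 1 < t →
          pt d p0 t x ≤ C * (1 + t ^ ((1 + γ) / 2)) *
            (1 + ‖x‖ ^ 2) ^ (-(1 + γ + (d : ℝ)) / 2)) := by
  have hd2 : (0:ℝ) ≤ (d:ℝ) / 2 := by positivity
  set a : ℝ := (1 + γ + (d:ℝ)) / 2 with ha_def
  have ha : 0 < a := by rw [ha_def]; positivity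
  set s : ℝ := a + (d:ℝ) / 2 with hs_def
  have hs : 0 < s := by rw [hs_def]; linarith
  set K1 : ℝ := (Nat.factorial ⌊s⌋₊ : ℝ) + (Nat.factorial (⌊s⌋₊ + 1) : ℝ) with hK1_def
  set K2 : ℝ := (Nat.factorial ⌊a⌋₊ : ℝ) + (Nat.factorial (⌊a⌋₊ + 1) : ℝ) with hK2_def
  have hK1 : 0 < K1 := by rw [hK1_def]; positivity
  have hK2 : 0 < K2 := by rw [hK2_def]; positivity
  have hCpos : 0 < C2 * 4 ^ a + K1 * (8 ^ s * 2 ^ a) + K2 * (8 ^ a * 2 ^ a) := by positivity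
  refine ⟨C2 * 4 ^ a + K1 * (8 ^ s * 2 ^ a) + K2 * (8 ^ a * 2 ^ a), hCpos, ?_⟩
  intro p0 hp hptail x hx
  obtain ⟨hmeas, hnn, hint1⟩ := hp
  have hp0int : Integrable p0 := by
    by_contra hcon
    rw [MeasureTheory.integral_undef hcon] at hint1
    norm_num at hint1
  set r : ℝ := ‖x‖ with hr_def
  have hr1 : 1 < r := hx
  have hr0 : 0 < r := lt_trans one_pos hr1
  have hr2 : 1 ≤ r ^ 2 := by nlinarith
  have hXa : (-(1 + γ + (d:ℝ)) / 2) = -a := by rw [ha_def]; ring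
  simp only [hXa]
  set X : ℝ := (1 + r ^ 2) ^ (-a) with hX_def
  have hX0 : 0 < X := Real.rpow_pos_of_pos (by positivity) _
  -- the main splitting bound, valid for all t > 0
  have main : ∀ t : ℝ, 0 < t →
      pt d p0 t x ≤ C2 * 4 ^ a * X +
        (2 * π * t) ^ (-(d:ℝ) / 2) * Real.exp (-(r ^ 2 / (8 * t))) := by
    intro t ht
    set M : ℝ := (2 * π * t) ^ (-(d:ℝ) / 2) * Real.exp (-(r ^ 2 / (8 * t))) with hM_def
    have hM0 : 0 ≤ M := by rw [hM_def]; positivity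
    set c : ℝ := C2 * 4 ^ a * X with hc_def
    have hc0 : 0 ≤ c := by rw [hc_def]; positivity
    have hgi1 : Integrable (fun y : Euc d => gaussianKernel d t (x - y)) :=
      (integrable_gK d ht).comp_sub_left x
    have hfg : ∀ y : Euc d, p0 y * gaussianKernel d t (x - y)
        ≤ M * p0 y + c * gaussianKernel d t (x - y) := by
      intro y
      have hgk0 : 0 ≤ gaussianKernel d t (x - y) := gK_nonneg d ht _
      rcases le_or_gt (r / 2) ‖y‖ with hcase | hcase
      · -- far region: p0 y is small
        have h1 : p0 y ≤ c := by
          have h2 := hptail y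
          rw [hXa] at h2
          have hsq : r ^ 2 / 4 ≤ ‖y‖ ^ 2 := by
            have := pow_le_pow_left₀ (by positivity : (0:ℝ) ≤ r / 2) hcase 2
            nlinarith
          have hle : (1 + r ^ 2) / 4 ≤ 1 + ‖y‖ ^ 2 := by nlinarith
          have h3 : (1 + ‖y‖ ^ 2 : ℝ) ^ (-a) ≤ ((1 + r ^ 2) / 4) ^ (-a) :=
            Real.rpow_le_rpow_of_nonpos (by positivity) hle (neg_nonpos.mpr ha.le)
          have h4 : ((1 + r ^ 2) / 4 : ℝ) ^ (-a) = (1 + r ^ 2) ^ (-a) * 4 ^ a :=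
            div_rpow_neg (by positivity) (by norm_num)
          rw [h4] at h3
          calc p0 y ≤ C2 * (1 + ‖y‖ ^ 2) ^ (-a) := h2
          _ ≤ C2 * ((1 + r ^ 2) ^ (-a) * 4 ^ a) := by
              exact mul_le_mul_of_nonneg_left h3 hC2.le
          _ = c := by rw [hc_def, hX_def]; ring
        have h6 := mul_le_mul_of_nonneg_right h1 hgk0
        have h7 := mul_nonneg hM0 (hnn y)
        linarith
      · -- near region: the Gaussian kernel is small
        have hxy : r / 2 ≤ ‖x - y‖ := by
          have := norm_sub_norm_le x y
          rw [← hr_def] at this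
          linarith
        have hsq : r ^ 2 / 4 ≤ ‖x - y‖ ^ 2 := by
          have := pow_le_pow_left₀ (by positivity : (0:ℝ) ≤ r / 2) hxy 2
          nlinarith
        have hexp : Real.exp (-‖x - y‖ ^ 2 / (2 * t)) ≤ Real.exp (-(r ^ 2 / (8 * t))) := by
          apply Real.exp_le_exp.mpr
          rw [neg_div, neg_le_neg_iff, div_le_div_iff₀ (by positivity) (by positivity)]
          nlinarith
        have hgkM : gaussianKernel d t (x - y) ≤ M := by
          rw [hM_def]
          unfold gaussianKernel
          exact mul_le_mul_of_nonneg_left hexp (by positivity)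
        have h5 : p0 y * gaussianKernel d t (x - y) ≤ M * p0 y := by
          calc p0 y * gaussianKernel d t (x - y) ≤ p0 y * M :=
            mul_le_mul_of_nonneg_left hgkM (hnn y)
          _ = M * p0 y := by ring
        have h6 := mul_nonneg hc0 hgk0
        linarith
    have hmono : (∫ y, p0 y * gaussianKernel d t (x - y)) ≤
        ∫ y, (M * p0 y + c * gaussianKernel d t (x - y)) := by
      refine integral_mono_of_nonneg ?_ ((hp0int.const_mul M).add (hgi1.const_mul c)) ?_
      · exact Filter.Eventually.of_forall fun y => mul_nonneg (hnn y) (gK_nonneg d ht _)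
      · exact Filter.Eventually.of_forall hfg
    have hval : (∫ y, (M * p0 y + c * gaussianKernel d t (x - y))) = M + c := by
      rw [integral_add (hp0int.const_mul M) (hgi1.const_mul c),
        MeasureTheory.integral_const_mul, MeasureTheory.integral_const_mul, hint1,
        integral_sub_left_eq_self (gaussianKernel d t) volume x, integral_gK d ht]
      ring
    unfold pt
    rw [hval] at hmono
    linarith
  constructor
  · -- case t ≤ 1
    intro t ht ht1
    have hu : 0 < r ^ 2 / (8 * t) := by positivity
    have h1 := exp_neg_le_rpow s hs.le hu
    rw [← hK1_def] at h1
    have h2 : (r ^ 2 / (8 * t)) ^ (-s) = (r ^ 2) ^ (-s) * (8 * t) ^ s :=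
      div_rpow_neg (by positivity) (by positivity)
    have h4 : ((8 : ℝ) * t) ^ s = 8 ^ s * t ^ s := Real.mul_rpow (by norm_num) ht.le
    have h3 : (2 * π * t) ^ (-(d:ℝ) / 2) ≤ t ^ (-(d:ℝ) / 2) := by
      rw [Real.mul_rpow (by positivity) ht.le]
      refine mul_le_of_le_one_left (Real.rpow_nonneg ht.le _) ?_
      exact Real.rpow_le_one_of_one_le_of_nonpos (by nlinarith [pi_gt_three])
        (by rw [neg_div]; exact neg_nonpos.mpr hd2)
    have h5 : t ^ (-(d:ℝ) / 2) * t ^ s = t ^ a := by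
      rw [← Real.rpow_add ht]
      congr 1
      rw [hs_def]; ring
    have h6 : t ^ a ≤ 1 := Real.rpow_le_one ht.le ht1 ha.le
    have h7 : (r ^ 2) ^ (-s) ≤ (r ^ 2) ^ (-a) :=
      Real.rpow_le_rpow_of_exponent_le hr2 (by rw [hs_def]; linarith)
    have h8 : (r ^ 2) ^ (-a) ≤ 2 ^ a * (1 + r ^ 2) ^ (-a) := by
      have h9 : ((1 + r ^ 2) / 2 : ℝ) ^ (-a) = (1 + r ^ 2) ^ (-a) * 2 ^ a :=
        div_rpow_neg (by positivity) (by norm_num)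
      have h10 : (r ^ 2 : ℝ) ^ (-a) ≤ ((1 + r ^ 2) / 2) ^ (-a) :=
        Real.rpow_le_rpow_of_nonpos (by positivity) (by nlinarith) (neg_nonpos.mpr ha.le)
      rw [h9] at h10
      linarith
    have hM : (2 * π * t) ^ (-(d:ℝ) / 2) * Real.exp (-(r ^ 2 / (8 * t)))
        ≤ K1 * (8 ^ s * 2 ^ a) * X := by
      calc (2 * π * t) ^ (-(d:ℝ) / 2) * Real.exp (-(r ^ 2 / (8 * t)))
          ≤ t ^ (-(d:ℝ) / 2) * (K1 * ((r ^ 2) ^ (-s) * (8 ^ s * t ^ s))) := by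
            refine mul_le_mul h3 ?_ (Real.exp_pos _).le (Real.rpow_nonneg ht.le _)
            calc Real.exp (-(r ^ 2 / (8 * t))) ≤ K1 * (r ^ 2 / (8 * t)) ^ (-s) := h1
            _ = K1 * ((r ^ 2) ^ (-s) * (8 ^ s * t ^ s)) := by rw [h2, h4]
        _ = K1 * 8 ^ s * (t ^ (-(d:ℝ) / 2) * t ^ s) * (r ^ 2) ^ (-s) := by ring
        _ = K1 * 8 ^ s * t ^ a * (r ^ 2) ^ (-s) := by rw [h5]
        _ ≤ K1 * 8 ^ s * 1 * (2 ^ a * (1 + r ^ 2) ^ (-a)) := by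
            refine mul_le_mul ?_ (h7.trans h8) (Real.rpow_nonneg (by positivity) _) ?_
            · exact mul_le_mul_of_nonneg_left h6 (by positivity)
            · positivity
        _ = K1 * (8 ^ s * 2 ^ a) * X := by rw [hX_def]; ring
    have hmain := main t ht
    have hnn2 : 0 ≤ K2 * (8 ^ a * 2 ^ a) * X := by positivity
    have hdist : (C2 * 4 ^ a + K1 * (8 ^ s * 2 ^ a) + K2 * (8 ^ a * 2 ^ a)) * X
        = C2 * 4 ^ a * X + K1 * (8 ^ s * 2 ^ a) * X + K2 * (8 ^ a * 2 ^ a) * X := by ring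
    clear_value X r s a K1 K2
    linarith [hmain, hM, hnn2, hdist]
  · -- case t > 1
    intro t ht1
    have ht : 0 < t := lt_trans one_pos ht1
    have hu : 0 < r ^ 2 / (8 * t) := by positivity
    have h1 := exp_neg_le_rpow a ha.le hu
    rw [← hK2_def] at h1
    have h2 : (r ^ 2 / (8 * t)) ^ (-a) = (r ^ 2) ^ (-a) * (8 * t) ^ a :=
      div_rpow_neg (by positivity) (by positivity)
    have h4 : ((8 : ℝ) * t) ^ a = 8 ^ a * t ^ a := Real.mul_rpow (by norm_num) ht.le
    have h3 : (2 * π * t) ^ (-(d:ℝ) / 2) ≤ t ^ (-(d:ℝ) / 2) := by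
      rw [Real.mul_rpow (by positivity) ht.le]
      refine mul_le_of_le_one_left (Real.rpow_nonneg ht.le _) ?_
      exact Real.rpow_le_one_of_one_le_of_nonpos (by nlinarith [pi_gt_three])
        (by rw [neg_div]; exact neg_nonpos.mpr hd2)
    have h5 : t ^ (-(d:ℝ) / 2) * t ^ a = t ^ ((1 + γ) / 2) := by
      rw [← Real.rpow_add ht]
      congr 1
      rw [ha_def]; ring
    have h8 : (r ^ 2) ^ (-a) ≤ 2 ^ a * (1 + r ^ 2) ^ (-a) := by
      have h9 : ((1 + r ^ 2) / 2 : ℝ) ^ (-a) = (1 + r ^ 2) ^ (-a) * 2 ^ a :=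
        div_rpow_neg (by positivity) (by norm_num)
      have h10 : (r ^ 2 : ℝ) ^ (-a) ≤ ((1 + r ^ 2) / 2) ^ (-a) :=
        Real.rpow_le_rpow_of_nonpos (by positivity) (by nlinarith) (neg_nonpos.mpr ha.le)
      rw [h9] at h10
      linarith
    have hT0 : 0 ≤ t ^ ((1 + γ) / 2) := Real.rpow_nonneg ht.le _
    have hM : (2 * π * t) ^ (-(d:ℝ) / 2) * Real.exp (-(r ^ 2 / (8 * t)))
        ≤ K2 * (8 ^ a * 2 ^ a) * t ^ ((1 + γ) / 2) * X := by
      calc (2 * π * t) ^ (-(d:ℝ) / 2) * Real.exp (-(r ^ 2 / (8 * t)))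
          ≤ t ^ (-(d:ℝ) / 2) * (K2 * ((r ^ 2) ^ (-a) * (8 ^ a * t ^ a))) := by
            refine mul_le_mul h3 ?_ (Real.exp_pos _).le (Real.rpow_nonneg ht.le _)
            calc Real.exp (-(r ^ 2 / (8 * t))) ≤ K2 * (r ^ 2 / (8 * t)) ^ (-a) := h1
            _ = K2 * ((r ^ 2) ^ (-a) * (8 ^ a * t ^ a)) := by rw [h2, h4]
        _ = K2 * 8 ^ a * (t ^ (-(d:ℝ) / 2) * t ^ a) * (r ^ 2) ^ (-a) := by ring
        _ = K2 * 8 ^ a * t ^ ((1 + γ) / 2) * (r ^ 2) ^ (-a) := by rw [h5]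
        _ ≤ K2 * 8 ^ a * t ^ ((1 + γ) / 2) * (2 ^ a * (1 + r ^ 2) ^ (-a)) := by
            refine mul_le_mul_of_nonneg_left h8 (by positivity)
        _ = K2 * (8 ^ a * 2 ^ a) * t ^ ((1 + γ) / 2) * X := by rw [hX_def]; ring
    have hmain := main t ht
    have hnn1 : 0 ≤ C2 * 4 ^ a * (t ^ ((1 + γ) / 2)) * X := by positivity
    have hnn2 : 0 ≤ K1 * (8 ^ s * 2 ^ a) * X := by positivity
    have hnn3 : 0 ≤ K1 * (8 ^ s * 2 ^ a) * (t ^ ((1 + γ) / 2)) * X := by positivity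
    have hnn4 : 0 ≤ K2 * (8 ^ a * 2 ^ a) * X := by positivity
    have hdist : (C2 * 4 ^ a + K1 * (8 ^ s * 2 ^ a) + K2 * (8 ^ a * 2 ^ a)) *
          (1 + t ^ ((1 + γ) / 2)) * X
        = C2 * 4 ^ a * X + C2 * 4 ^ a * t ^ ((1 + γ) / 2) * X
          + K1 * (8 ^ s * 2 ^ a) * X + K1 * (8 ^ s * 2 ^ a) * t ^ ((1 + γ) / 2) * X
          + K2 * (8 ^ a * 2 ^ a) * X + K2 * (8 ^ a * 2 ^ a) * t ^ ((1 + γ) / 2) * X := by ring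
    clear_value X r s a K1 K2
    linarith [hmain, hM, hnn1, hnn2, hnn3, hnn4, hdist]
end
end

section
/- Let p_0 be a probability density on ℝ^d with finite first moment M_1 := ∫ ‖z‖ p_0(z) dz < ∞. Then for every T > 0, the Gaussian-smoothed density p_T = p_0 * φ_T satisfies TV(p_T, φ_T) ≤ M_1 / (2√T). -/
open MeasureTheory Real
open scoped BigOperators ENNReal

noncomputable section

namespace Aux
open Filter
variable {d : ℕ} {T : ℝ}

theorem eucInt (d : ℕ) (F : Fin d → ℝ → ℝ) :
    (∫ x : Euc d, ∏ i, F i (x i)) = ∏ i, ∫ s, F i s := by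
  have h := ((EuclideanSpace.volume_preserving_symm_measurableEquiv_toLp (Fin d)).integral_comp
      (MeasurableEquiv.toLp 2 (Fin d → ℝ)).symm.measurableEmbedding
      (fun v : Fin d → ℝ => ∏ i, F i (v i)))
  exact h.trans (MeasureTheory.integral_fintype_prod_eq_prod F)

theorem eucIntegrable (d : ℕ) (F : Fin d → ℝ → ℝ) (hF : ∀ i, Integrable (F i)) :
    Integrable (fun x : Euc d => ∏ i, F i (x i)) :=
  ((EuclideanSpace.volume_preserving_symm_measurableEquiv_toLp (Fin d)).integrable_comp_emb
      (MeasurableEquiv.toLp 2 (Fin d → ℝ)).symm.measurableEmbedding).mpr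
    (MeasureTheory.Integrable.fintype_prod (f := F) hF)

/-- one-dimensional Gaussian factor -/
def E0 (T : ℝ) (s : ℝ) : ℝ := Real.exp (-(2*T)⁻¹ * s^2)

theorem normsq (x : Euc d) : ‖x‖^2 = ∑ i, (x i)^2 := by
  rw [EuclideanSpace.norm_eq, Real.sq_sqrt (by positivity)]
  simp [sq_abs]

theorem gauss_prod (hT : 0 < T) (x : Euc d) :
    gaussianKernel d T x = (2*π*T) ^ (-(d:ℝ)/2) * ∏ i, E0 T (x i) := by
  unfold gaussianKernel E0
  congr 1
  rw [← Real.exp_sum]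
  congr 1
  rw [normsq]
  rw [show -(∑ i, (x i)^2) / (2*T) = (-(2*T)⁻¹) * ∑ i, (x i)^2 by ring, Finset.mul_sum]

theorem hb' (hT : 0 < T) : (0:ℝ) < (2*T)⁻¹ := by positivity

theorem E0_integrable (hT : 0 < T) : Integrable (E0 T) := integrable_exp_neg_mul_sq (hb' hT)

theorem E0_int (hT : 0 < T) : ∫ s, E0 T s = Real.sqrt (2*π*T) := by
  unfold E0
  rw [integral_gaussian]
  congr 1
  field_simp

theorem CP1 (hT : 0 < T) : (2*π*T) ^ (-(d:ℝ)/2) * Real.sqrt (2*π*T) ^ d = 1 := by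
  have hA : (0:ℝ) < 2*π*T := by positivity
  rw [Real.sqrt_eq_rpow, ← Real.rpow_natCast ((2*π*T) ^ ((1:ℝ)/2)) d, ← Real.rpow_mul hA.le,
    ← Real.rpow_add hA]
  rw [show -(d:ℝ)/2 + 1/2 * d = 0 by ring, Real.rpow_zero]

theorem CP1' (hT : 0 < T) : (2*π*T) ^ (-(d:ℝ)/2) * ∏ _k : Fin d, Real.sqrt (2*π*T) = 1 := by
  rw [Finset.prod_const, Finset.card_univ, Fintype.card_fin]; exact CP1 hT

theorem gauss_integral (hT : 0 < T) : ∫ x : Euc d, gaussianKernel d T x = 1 := by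
  simp_rw [gauss_prod hT]
  rw [integral_const_mul, eucInt]
  simp_rw [E0_int hT]
  exact CP1' hT

theorem gauss_integrable (hT : 0 < T) : Integrable (gaussianKernel d T) := by
  have h := (eucIntegrable d (fun _ => E0 T) (fun _ => E0_integrable hT)).const_mul
    ((2*π*T) ^ (-(d:ℝ)/2))
  apply h.congr
  filter_upwards with x
  exact (gauss_prod hT x).symm

theorem gauss_pos (hT : 0 < T) (x : Euc d) : 0 < gaussianKernel d T x := by
  unfold gaussianKernel
  have : (0:ℝ) < 2*π*T := by positivity
  positivity

theorem gauss_cont (hT : 0 < T) : Continuous (gaussianKernel d T) := by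
  unfold gaussianKernel
  fun_prop

theorem gauss_le (hT : 0 < T) (x : Euc d) :
    gaussianKernel d T x ≤ (2*π*T) ^ (-(d:ℝ)/2) := by
  unfold gaussianKernel
  have h1 : Real.exp (-‖x‖^2/(2*T)) ≤ 1 := by
    rw [Real.exp_le_one_iff]
    have h0 : (0:ℝ) ≤ ‖x‖^2 := by positivity
    have h2 : (0:ℝ) < 2*T := by linarith
    exact div_nonpos_of_nonpos_of_nonneg (by linarith) h2.le
  have hC : (0:ℝ) < (2*π*T) ^ (-(d:ℝ)/2) := by
    have : (0:ℝ) < 2*π*T := by positivity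
    exact Real.rpow_pos_of_pos this _
  nlinarith [Real.exp_pos (-‖x‖^2/(2*T))]


/-- factor family for second moments -/
def FF (T : ℝ) (i j k : Fin d) (s : ℝ) : ℝ :=
  (if k = i then s else 1) * ((if k = j then s else 1) * E0 T s)

theorem intLin {b : ℝ} (hb : 0 < b) : ∫ s : ℝ, s * Real.exp (-b * s^2) = 0 := by
  have h : ∀ s : ℝ, (-s) * Real.exp (-b * (-s)^2) = -(s * Real.exp (-b*s^2)) := by
    intro s; simp [neg_sq]
  have h2 := MeasureTheory.integral_neg_eq_self (fun s : ℝ => s * Real.exp (-b * s^2)) volume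
  simp only [h] at h2
  rw [integral_neg] at h2
  linarith

theorem integrableSq {b : ℝ} (hb : 0 < b) :
    Integrable fun s : ℝ => s^2 * Real.exp (-b * s^2) := by
  have := integrable_rpow_mul_exp_neg_mul_sq hb (s := 2) (by norm_num)
  simpa [Real.rpow_natCast] using this

theorem tendstoPhiTop {b : ℝ} (hb : 0 < b) :
    Tendsto (fun s : ℝ => s * Real.exp (-b * s^2)) atTop (nhds 0) := by
  have h := rpow_mul_exp_neg_mul_sq_isLittleO_exp_neg hb 1
  have h2 : Tendsto (fun x : ℝ => Real.exp (-(1/2) * x)) atTop (nhds 0) := by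
    apply Real.tendsto_exp_atBot.comp
    exact Tendsto.const_mul_atTop_of_neg (by norm_num) tendsto_id
  have h3 := h.trans_tendsto h2
  have : (fun x : ℝ => x ^ (1:ℝ) * Real.exp (-b * x^2)) =ᶠ[atTop] fun s => s * Real.exp (-b*s^2) := by
    filter_upwards [eventually_ge_atTop 0] with x hx
    rw [Real.rpow_one]
  exact Tendsto.congr' this h3

theorem tendstoPhiBot {b : ℝ} (hb : 0 < b) :
    Tendsto (fun s : ℝ => s * Real.exp (-b * s^2)) atBot (nhds 0) := by
  have h := (tendstoPhiTop hb).comp tendsto_neg_atBot_atTop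
  have : (fun s : ℝ => (fun s : ℝ => s * Real.exp (-b * s^2)) (-s))
      = fun s : ℝ => -(s * Real.exp (-b * s^2)) := by
    funext s; simp [neg_sq]
  rw [Function.comp_def, this] at h
  simpa using h.neg

theorem intSq {b : ℝ} (hb : 0 < b) :
    ∫ s : ℝ, s^2 * Real.exp (-b * s^2) = Real.sqrt (π / b) / (2*b) := by
  set φ : ℝ → ℝ := fun s => s * Real.exp (-b * s^2) with hφ
  set φ' : ℝ → ℝ := fun s => Real.exp (-b * s^2) - 2*b*(s^2 * Real.exp (-b * s^2)) with hφ'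
  have hderiv : ∀ s : ℝ, HasDerivAt φ (φ' s) s := by
    intro s
    have h1 : HasDerivAt (fun s : ℝ => -b * s^2) (-b * (2*s)) s := by
      simpa using ((hasDerivAt_pow 2 s).const_mul (-b))
    have h2 := (h1.exp).const_mul 1 |>.mul (hasDerivAt_id s)
    have h3 := (hasDerivAt_id s).mul h1.exp
    refine h3.congr_deriv ?_
    simp only [hφ', id_eq]
    ring
  have hint : Integrable φ' := by
    exact ((integrable_exp_neg_mul_sq hb).sub ((integrableSq hb).const_mul (2*b)))
  have htop : ∫ s in Set.Ioi (0:ℝ), φ' s = 0 - φ 0 :=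
    MeasureTheory.integral_Ioi_of_hasDerivAt_of_tendsto
      (Continuous.continuousWithinAt (by fun_prop))
      (fun x _ => hderiv x) hint.integrableOn (tendstoPhiTop hb)
  have hbot : ∫ s in Set.Iic (0:ℝ), φ' s = φ 0 - 0 :=
    MeasureTheory.integral_Iic_of_hasDerivAt_of_tendsto
      (Continuous.continuousWithinAt (by fun_prop))
      (fun x _ => hderiv x) hint.integrableOn (tendstoPhiBot hb)
  have hsplit : (∫ s in Set.Iic (0:ℝ), φ' s) + ∫ s in Set.Ioi (0:ℝ), φ' s = ∫ s : ℝ, φ' s :=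
    intervalIntegral.integral_Iic_add_Ioi hint.integrableOn hint.integrableOn
  have hzero : ∫ s : ℝ, φ' s = 0 := by rw [← hsplit, htop, hbot]; ring
  have hexp : ∫ s : ℝ, Real.exp (-b * s^2) = Real.sqrt (π / b) := integral_gaussian b
  rw [hφ', integral_sub (integrable_exp_neg_mul_sq hb) ((integrableSq hb).const_mul (2*b))] at hzero
  rw [integral_const_mul, hexp] at hzero
  field_simp at hzero ⊢
  linarith

theorem E2_int (hT : 0 < T) : ∫ s : ℝ, s^2 * E0 T s = T * Real.sqrt (2*π*T) := by
  unfold E0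
  rw [intSq (hb' hT)]
  rw [show π / (2*T)⁻¹ = 2*π*T by field_simp]
  rw [show 2 * (2*T)⁻¹ = T⁻¹ by field_simp]
  field_simp

theorem FF_integrable (hT : 0 < T) (i j k : Fin d) : Integrable (FF T i j k) := by
  by_cases hi : k = i <;> by_cases hj : k = j
  · rw [show FF T i j k = fun s => s^2 * Real.exp (-(2*T)⁻¹ * s^2) from by
      funext s; unfold FF E0; rw [if_pos hi, if_pos hj]; ring]
    exact integrableSq (hb' hT)
  · rw [show FF T i j k = fun s => s * Real.exp (-(2*T)⁻¹ * s^2) from by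
      funext s; unfold FF E0; rw [if_pos hi, if_neg hj]; ring]
    exact integrable_mul_exp_neg_mul_sq (hb' hT)
  · rw [show FF T i j k = fun s => s * Real.exp (-(2*T)⁻¹ * s^2) from by
      funext s; unfold FF E0; rw [if_neg hi, if_pos hj]; ring]
    exact integrable_mul_exp_neg_mul_sq (hb' hT)
  · rw [show FF T i j k = fun s => Real.exp (-(2*T)⁻¹ * s^2) from by
      funext s; unfold FF E0; rw [if_neg hi, if_neg hj]; ring]
    exact integrable_exp_neg_mul_sq (hb' hT)

theorem FF_prod (i j : Fin d) (x : Euc d) :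
    ∏ k, FF T i j k (x k) = x i * x j * ∏ k, E0 T (x k) := by
  unfold FF
  rw [Finset.prod_mul_distrib, Finset.prod_mul_distrib]
  rw [Finset.prod_ite_eq' Finset.univ i (fun k => x k),
    Finset.prod_ite_eq' Finset.univ j (fun k => x k)]
  simp [mul_assoc]

theorem FF_intprod (hT : 0 < T) (i j : Fin d) :
    ∏ k, (∫ s, FF T i j k s) =
      if i = j then T * ∏ _k : Fin d, Real.sqrt (2*π*T) else 0 := by
  by_cases hij : i = j
  · subst hij
    rw [if_pos rfl]
    have hval : ∀ k, (∫ s, FF T i i k s) = if k = i then T * Real.sqrt (2*π*T)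
        else Real.sqrt (2*π*T) := by
      intro k
      by_cases h : k = i
      · rw [if_pos h]
        rw [show (fun s => FF T i i k s) = fun s => s^2 * E0 T s from by
          funext s; unfold FF; rw [if_pos h]; ring]
        exact E2_int hT
      · rw [if_neg h]
        rw [show (fun s => FF T i i k s) = fun s => E0 T s from by
          funext s; unfold FF; rw [if_neg h]; ring]
        exact E0_int hT
    simp_rw [hval]
    have : (fun k => if k = i then T * Real.sqrt (2*π*T) else Real.sqrt (2*π*T))
        = Function.update (fun _ : Fin d => Real.sqrt (2*π*T)) i (T * Real.sqrt (2*π*T)) := by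
      funext k; rw [Function.update_apply]
    rw [this, Finset.prod_update_of_mem (Finset.mem_univ i)]
    rw [mul_assoc, ← Finset.prod_eq_mul_prod_sdiff_singleton_of_mem (Finset.mem_univ i)
      (fun _ : Fin d => Real.sqrt (2*π*T))]
  · rw [if_neg hij]
    apply Finset.prod_eq_zero (Finset.mem_univ i)
    rw [show (fun s => FF T i j i s) = fun s => s * Real.exp (-(2*T)⁻¹ * s^2) from by
      funext s; unfold FF E0; rw [if_pos rfl, if_neg hij]; ring]
    exact intLin (hb' hT)

theorem inner_sum (x y : Euc d) : (inner ℝ x y : ℝ) = ∑ i, x i * y i := by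
  simp [PiLp.inner_apply, RCLike.inner_apply, mul_comm]

theorem moment2 (hT : 0 < T) (y : Euc d) :
    ∫ x : Euc d, (inner ℝ x y : ℝ)^2 * gaussianKernel d T x = T * ‖y‖^2 := by
  set C := (2*π*T) ^ (-(d:ℝ)/2) with hC
  have hpt : ∀ x : Euc d, (inner ℝ x y : ℝ)^2 * gaussianKernel d T x
      = C * ∑ i, ∑ j, (y i * y j) * ∏ k, FF T i j k (x k) := by
    intro x
    rw [inner_sum, gauss_prod hT, sq, Finset.sum_mul_sum, Finset.sum_mul, Finset.mul_sum]
    apply Finset.sum_congr rfl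
    intro i _
    rw [Finset.sum_mul, Finset.mul_sum]
    apply Finset.sum_congr rfl
    intro j _
    rw [FF_prod]
    ring
  simp_rw [hpt]
  rw [integral_const_mul]
  rw [integral_finset_sum _ (fun i _ => ?_)]
  swap
  · apply integrable_finset_sum _ (fun j _ => ?_)
    have h := (eucIntegrable d (FF T i j) (FF_integrable hT i j)).const_mul (y i * y j)
    exact h
  calc C * ∑ i, ∫ x : Euc d, ∑ j, (y i * y j) * ∏ k, FF T i j k (x k)
      = C * ∑ i, ∑ j, (y i * y j) * ∏ k, (∫ s, FF T i j k s) := by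
        congr 1
        apply Finset.sum_congr rfl
        intro i _
        rw [integral_finset_sum _ (fun j _ =>
          (eucIntegrable d (FF T i j) (FF_integrable hT i j)).const_mul (y i * y j))]
        apply Finset.sum_congr rfl
        intro j _
        rw [integral_const_mul, eucInt]
    _ = T * ‖y‖^2 := by
        simp_rw [FF_intprod hT, mul_ite, mul_zero, Finset.sum_ite_eq, Finset.mem_univ, if_true]
        rw [normsq y, Finset.mul_sum, Finset.mul_sum]
        apply Finset.sum_congr rfl
        intro i _
        have h1 := CP1' (d := d) hT
        linear_combination (T * (y i * y i)) * h1

theorem integrable_normsq_gauss (hT : 0 < T) :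
    Integrable fun x : Euc d => ‖x‖^2 * gaussianKernel d T x := by
  have heq : (fun x : Euc d => ‖x‖^2 * gaussianKernel d T x)
      = fun x => (2*π*T) ^ (-(d:ℝ)/2) * ∑ i, ∏ k, FF T i i k (x k) := by
    funext x
    rw [normsq, gauss_prod hT, Finset.sum_mul, Finset.mul_sum]
    apply Finset.sum_congr rfl
    intro i _
    rw [FF_prod]
    ring
  rw [heq]
  exact (integrable_finset_sum _ fun i _ =>
    eucIntegrable d (FF T i i) (FF_integrable hT i i)).const_mul _

theorem cont_inner (y : Euc d) : Continuous fun x : Euc d => (inner ℝ x y : ℝ) :=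
  Continuous.inner continuous_id continuous_const

theorem integrable_sqinner (hT : 0 < T) (y : Euc d) :
    Integrable fun x : Euc d => (inner ℝ x y : ℝ)^2 * gaussianKernel d T x := by
  apply Integrable.mono' ((integrable_normsq_gauss hT).const_mul (‖y‖^2))
  · exact (((cont_inner y).pow 2).mul (gauss_cont hT)).aestronglyMeasurable
  · filter_upwards with x
    have hg := (gauss_pos hT x).le
    have hi := abs_real_inner_le_norm x y
    rw [Real.norm_eq_abs, abs_mul, abs_of_nonneg hg, abs_of_nonneg (sq_nonneg _)]
    have h2 : (inner ℝ x y : ℝ)^2 ≤ ‖x‖^2 * ‖y‖^2 := by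
      nlinarith [sq_abs (inner ℝ x y : ℝ), abs_nonneg (inner ℝ x y : ℝ), norm_nonneg x, norm_nonneg y]
    nlinarith [mul_le_mul_of_nonneg_right h2 hg]

theorem integrable_absinner (hT : 0 < T) (y : Euc d) :
    Integrable fun x : Euc d => |(inner ℝ x y : ℝ)| * gaussianKernel d T x := by
  apply Integrable.mono'
    (((integrable_sqinner hT y).add (gauss_integrable hT)).const_mul (1/2))
  · exact (((cont_inner y).abs).mul (gauss_cont hT)).aestronglyMeasurable
  · filter_upwards with x
    have hg := (gauss_pos hT x).le
    have h1 := sq_nonneg (|(inner ℝ x y : ℝ)| - 1)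
    have h2 := sq_abs (inner ℝ x y : ℝ)
    rw [Real.norm_eq_abs, abs_mul, abs_of_nonneg hg, abs_abs]
    simp only [Pi.add_apply]
    nlinarith [mul_nonneg h1 hg, h2]

theorem absmoment (hT : 0 < T) (y : Euc d) :
    ∫ x : Euc d, |(inner ℝ x y : ℝ)| * gaussianKernel d T x ≤ Real.sqrt T * ‖y‖ := by
  rcases eq_or_ne y 0 with rfl | hy
  · simp
  · have hny : 0 < ‖y‖ := norm_pos_iff.mpr hy
    have hsT : 0 < Real.sqrt T := Real.sqrt_pos.mpr hT
    set a : ℝ := Real.sqrt T * ‖y‖ with ha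
    have hapos : 0 < a := by positivity
    have ha2 : a^2 = T * ‖y‖^2 := by
      rw [ha, mul_pow, Real.sq_sqrt hT.le]
    have h1 : ∀ x : Euc d, (2*a) * (|(inner ℝ x y : ℝ)| * gaussianKernel d T x) ≤
        (inner ℝ x y : ℝ)^2 * gaussianKernel d T x + a^2 * gaussianKernel d T x := by
      intro x
      have hg := (gauss_pos hT x).le
      nlinarith [mul_nonneg (sq_nonneg (|(inner ℝ x y : ℝ)| - a)) hg, sq_abs (inner ℝ x y : ℝ)]
    have h2 := integral_mono ((integrable_absinner hT y).const_mul (2*a))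
      ((integrable_sqinner hT y).add ((gauss_integrable hT).const_mul (a^2))) h1
    simp only [Pi.add_apply] at h2
    rw [integral_const_mul, integral_add (integrable_sqinner hT y)
      ((gauss_integrable hT).const_mul (a^2)), integral_const_mul,
      moment2 hT, gauss_integral hT, mul_one] at h2
    have h3 : T * ‖y‖^2 + a^2 = (2*a) * a := by
      nlinarith [ha2]
    rw [h3] at h2
    exact le_of_mul_le_mul_left h2 (by positivity)

theorem gauss_hasDeriv (hT : 0 < T) (x y : Euc d) (s : ℝ) :
    HasDerivAt (fun u : ℝ => gaussianKernel d T (x - u • y))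
      (((inner ℝ (x - s • y) y : ℝ)/T) * gaussianKernel d T (x - s • y)) s := by
  set C := (2*π*T) ^ (-(d:ℝ)/2) with hCdef
  have hnorm : ∀ u : ℝ, ‖x - u • y‖^2 = ‖x‖^2 - 2*(u*(inner ℝ x y:ℝ)) + u^2*‖y‖^2 := by
    intro u
    rw [norm_sub_sq_real, real_inner_smul_right, norm_smul]
    simp only [Real.norm_eq_abs, mul_pow, sq_abs]
    try ring
  have hfun : ∀ u : ℝ, gaussianKernel d T (x - u • y)
      = C * Real.exp ((-(‖x‖^2) + 2*(u*(inner ℝ x y:ℝ)) - u^2*‖y‖^2) / (2*T)) := by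
    intro u
    unfold gaussianKernel
    rw [hnorm u]
    rw [show -(‖x‖^2 - 2*(u*(inner ℝ x y:ℝ)) + u^2*‖y‖^2)/(2*T)
      = (-(‖x‖^2) + 2*(u*(inner ℝ x y:ℝ)) - u^2*‖y‖^2)/(2*T) by ring]
  have hA : HasDerivAt (fun u : ℝ => 2*(u*(inner ℝ x y:ℝ))) (2*(inner ℝ x y:ℝ)) s := by
    simpa [mul_comm, mul_assoc, mul_one] using ((hasDerivAt_id s).mul_const ((inner ℝ x y:ℝ))).const_mul 2
  have hB : HasDerivAt (fun u : ℝ => u^2*‖y‖^2) (2*s*‖y‖^2) s := by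
    simpa using (hasDerivAt_pow 2 s).mul_const (‖y‖^2)
  have hq : HasDerivAt (fun u : ℝ => (-(‖x‖^2) + 2*(u*(inner ℝ x y:ℝ)) - u^2*‖y‖^2) / (2*T))
      ((2*(inner ℝ x y:ℝ) - 2*s*‖y‖^2)/(2*T)) s := by
    simpa using (((hasDerivAt_const s (-(‖x‖^2))).add hA).sub hB).div_const (2*T)
  have hexp := (hq.exp).const_mul C
  have heq : (fun u : ℝ => gaussianKernel d T (x - u • y))
      = fun u => C * Real.exp ((-(‖x‖^2) + 2*(u*(inner ℝ x y:ℝ)) - u^2*‖y‖^2) / (2*T)) :=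
    funext hfun
  rw [heq]
  refine hexp.congr_deriv ?_
  rw [hfun s, inner_sub_left, real_inner_smul_left, real_inner_self_eq_norm_sq]
  field_simp

theorem shift_int (hT : 0 < T) (y v : Euc d) :
    (∫ x : Euc d, |(inner ℝ (x - v) y : ℝ)| * gaussianKernel d T (x - v))
      = ∫ x : Euc d, |(inner ℝ x y : ℝ)| * gaussianKernel d T x :=
  integral_sub_right_eq_self (fun z => |(inner ℝ z y : ℝ)| * gaussianKernel d T z) v

theorem D_integrable (hT : 0 < T) (y : Euc d) (s : ℝ) :
    Integrable fun x : Euc d =>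
      |(inner ℝ (x - s•y) y : ℝ)/T| * gaussianKernel d T (x - s•y) := by
  have h := ((integrable_absinner hT y).div_const T).comp_sub_right (s•y)
  apply h.congr
  filter_upwards with x
  rw [abs_div, abs_of_pos hT, div_mul_eq_mul_div]

theorem D_int_bound (hT : 0 < T) (y : Euc d) (s : ℝ) :
    ∫ x : Euc d, |(inner ℝ (x - s•y) y : ℝ)/T| * gaussianKernel d T (x - s•y)
      ≤ ‖y‖ / Real.sqrt T := by
  have habs : ∀ z : Euc d, |(inner ℝ z y : ℝ)/T| * gaussianKernel d T z
      = (|(inner ℝ z y : ℝ)| * gaussianKernel d T z)/T := by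
    intro z; rw [abs_div, abs_of_pos hT, div_mul_eq_mul_div]
  simp_rw [habs]
  rw [integral_div, shift_int hT y (s•y)]
  have hM := absmoment hT y
  have hsT : 0 < Real.sqrt T := Real.sqrt_pos.mpr hT
  rw [div_le_div_iff₀ hT hsT]
  nlinarith [Real.mul_self_sqrt hT.le, norm_nonneg y,
    mul_le_mul_of_nonneg_right hM hsT.le]

theorem gauss_shift_lintegral (hT : 0 < T) (y : Euc d) :
    ∫⁻ x : Euc d, ENNReal.ofReal |gaussianKernel d T (x - y) - gaussianKernel d T x|
      ≤ ENNReal.ofReal (‖y‖ / Real.sqrt T) := by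
  set D : ℝ → Euc d → ℝ := fun s x =>
    |(inner ℝ (x - s•y) y : ℝ)/T| * gaussianKernel d T (x - s•y) with hD
  have hcontD : Continuous fun p : Euc d × ℝ => D p.2 p.1 := by
    have hm : Continuous fun p : Euc d × ℝ => p.1 - p.2 • y :=
      continuous_fst.sub (continuous_snd.smul continuous_const)
    exact (((Continuous.inner hm continuous_const).div_const T).abs).mul
      ((gauss_cont hT).comp hm)
  have hcontDs : ∀ x : Euc d, Continuous fun s : ℝ => D s x := by
    intro x
    have hm : Continuous fun s : ℝ => x - s • y :=
      continuous_const.sub (continuous_id.smul continuous_const)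
    exact (((Continuous.inner hm continuous_const).div_const T).abs).mul
      ((gauss_cont hT).comp hm)
  have hDnn : ∀ s x, 0 ≤ D s x := fun s x =>
    mul_nonneg (abs_nonneg _) (gauss_pos hT _).le
  have hptw : ∀ x : Euc d, |gaussianKernel d T (x - y) - gaussianKernel d T x|
      ≤ ∫ s in (0:ℝ)..1, D s x := by
    intro x
    have hFTC := intervalIntegral.integral_eq_sub_of_hasDerivAt (a := (0:ℝ)) (b := (1:ℝ))
      (f := fun u : ℝ => gaussianKernel d T (x - u•y))
      (f' := fun s : ℝ => ((inner ℝ (x - s•y) y : ℝ)/T) * gaussianKernel d T (x - s•y))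
      (fun s _ => gauss_hasDeriv hT x y s) ?_
    · simp only [zero_smul, one_smul, sub_zero] at hFTC
      rw [← hFTC]
      refine (intervalIntegral.abs_integral_le_integral_abs zero_le_one).trans ?_
      apply le_of_eq
      apply intervalIntegral.integral_congr
      intro s _
      show |_ * _| = _
      rw [abs_mul, abs_of_nonneg (gauss_pos hT _).le]
    · apply Continuous.intervalIntegrable
      have hm : Continuous fun s : ℝ => x - s • y :=
        continuous_const.sub (continuous_id.smul continuous_const)
      exact ((Continuous.inner hm continuous_const).div_const T).mul ((gauss_cont hT).comp hm)
  calc ∫⁻ x : Euc d, ENNReal.ofReal |gaussianKernel d T (x - y) - gaussianKernel d T x|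
      ≤ ∫⁻ x : Euc d, ENNReal.ofReal (∫ s in (0:ℝ)..1, D s x) :=
        lintegral_mono fun x => ENNReal.ofReal_le_ofReal (hptw x)
    _ = ∫⁻ x : Euc d, ∫⁻ s in Set.Ioc (0:ℝ) 1, ENNReal.ofReal (D s x) := by
        apply lintegral_congr
        intro x
        rw [intervalIntegral.integral_of_le zero_le_one]
        rw [← ofReal_integral_eq_lintegral_ofReal
          ((hcontDs x).integrableOn_Ioc)
          (Filter.Eventually.of_forall fun s => hDnn s x)]
    _ = ∫⁻ s in Set.Ioc (0:ℝ) 1, ∫⁻ x : Euc d, ENNReal.ofReal (D s x) := by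
        apply lintegral_lintegral_swap
        exact (ENNReal.measurable_ofReal.comp hcontD.measurable).aemeasurable
    _ ≤ ∫⁻ _s in Set.Ioc (0:ℝ) 1, ENNReal.ofReal (‖y‖ / Real.sqrt T) := by
        apply lintegral_mono_ae
        filter_upwards with s
        rw [← ofReal_integral_eq_lintegral_ofReal (D_integrable hT y s)
          (Filter.Eventually.of_forall fun x => hDnn s x)]
        exact ENNReal.ofReal_le_ofReal (D_int_bound hT y s)
    _ = ENNReal.ofReal (‖y‖ / Real.sqrt T) := by
        rw [setLIntegral_const, Real.volume_Ioc]
        norm_num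

end Aux

namespace Aux
variable {d : ℕ} {T : ℝ} {p0 : Euc d → ℝ}

theorem p0_integrable (hp0 : IsProbDensity p0) : Integrable p0 := by
  by_contra h
  have h2 := hp0.2.2
  rw [integral_undef h] at h2
  exact one_ne_zero h2.symm

theorem conv_int (hT : 0 < T) (hp0 : IsProbDensity p0) (x : Euc d) :
    Integrable fun y : Euc d => p0 y * gaussianKernel d T (x - y) := by
  apply Integrable.mono' ((p0_integrable hp0).mul_const ((2*π*T) ^ (-(d:ℝ)/2)))
  · exact (hp0.1.mul ((gauss_cont hT).measurable.comp
      (measurable_const.sub measurable_id))).aestronglyMeasurable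
  · filter_upwards with y
    rw [Real.norm_eq_abs, abs_mul, abs_of_nonneg (hp0.2.1 y),
      abs_of_nonneg (gauss_pos hT _).le]
    exact mul_le_mul_of_nonneg_left (gauss_le hT _) (hp0.2.1 y)

theorem diff_repr (hT : 0 < T) (hp0 : IsProbDensity p0) (x : Euc d) :
    pt d p0 T x - gaussianKernel d T x
      = ∫ y, p0 y * (gaussianKernel d T (x - y) - gaussianKernel d T x) := by
  have h1 : ∫ y : Euc d, p0 y * gaussianKernel d T x = gaussianKernel d T x := by
    rw [integral_mul_const, hp0.2.2, one_mul]
  unfold pt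
  rw [show (∫ y, p0 y * gaussianKernel d T (x - y)) - gaussianKernel d T x
      = (∫ y, p0 y * gaussianKernel d T (x - y)) - ∫ y : Euc d, p0 y * gaussianKernel d T x by
        rw [h1]]
  rw [← integral_sub (conv_int hT hp0 x) ((p0_integrable hp0).mul_const _)]
  congr 1
  funext y
  ring

theorem pt_meas (hT : 0 < T) (hp0 : IsProbDensity p0) :
    AEStronglyMeasurable (fun x : Euc d => pt d p0 T x) volume := by
  unfold pt
  apply StronglyMeasurable.aestronglyMeasurable
  apply MeasureTheory.StronglyMeasurable.integral_prod_right
    (f := fun (x y : Euc d) => p0 y * gaussianKernel d T (x - y))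
  exact ((hp0.1.comp measurable_snd).mul
    ((gauss_cont hT).measurable.comp (measurable_fst.sub measurable_snd))).stronglyMeasurable

theorem diff_integrand_int (hT : 0 < T) (hp0 : IsProbDensity p0) (x : Euc d) :
    Integrable fun y : Euc d =>
      p0 y * |gaussianKernel d T (x - y) - gaussianKernel d T x| := by
  apply Integrable.mono' (((p0_integrable hp0).mul_const (2 * (2*π*T) ^ (-(d:ℝ)/2))))
  · exact (hp0.1.mul (((gauss_cont hT).measurable.comp
      (measurable_const.sub measurable_id)).sub measurable_const).abs).aestronglyMeasurable
  · filter_upwards with y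
    rw [Real.norm_eq_abs, abs_mul, abs_of_nonneg (hp0.2.1 y), abs_abs]
    apply mul_le_mul_of_nonneg_left _ (hp0.2.1 y)
    have h1 := gauss_le hT (x - y); have h2 := gauss_le hT x
    have h3 := (gauss_pos hT (x - y)).le; have h4 := (gauss_pos hT x).le
    rw [abs_sub_le_iff]; constructor <;> linarith

theorem main_lintegral (hT : 0 < T) (hp0 : IsProbDensity p0)
    (hM1 : Integrable fun z : Euc d => ‖z‖ * p0 z) :
    ∫⁻ x : Euc d, ENNReal.ofReal |pt d p0 T x - gaussianKernel d T x|
      ≤ ENNReal.ofReal ((∫ z : Euc d, ‖z‖ * p0 z) / Real.sqrt T) := by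
  have hsT : 0 < Real.sqrt T := Real.sqrt_pos.mpr hT
  have hA1 : ∀ x : Euc d, |pt d p0 T x - gaussianKernel d T x|
      ≤ ∫ y, p0 y * |gaussianKernel d T (x - y) - gaussianKernel d T x| := by
    intro x
    rw [diff_repr hT hp0 x]
    calc |∫ y, p0 y * (gaussianKernel d T (x - y) - gaussianKernel d T x)|
        = ‖∫ y, p0 y * (gaussianKernel d T (x - y) - gaussianKernel d T x)‖ :=
          (Real.norm_eq_abs _).symm
      _ ≤ ∫ y, ‖p0 y * (gaussianKernel d T (x - y) - gaussianKernel d T x)‖ :=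
          norm_integral_le_integral_norm _
      _ = ∫ y, p0 y * |gaussianKernel d T (x - y) - gaussianKernel d T x| := by
          apply integral_congr_ae
          filter_upwards with y
          rw [Real.norm_eq_abs, abs_mul, abs_of_nonneg (hp0.2.1 y)]
  calc ∫⁻ x : Euc d, ENNReal.ofReal |pt d p0 T x - gaussianKernel d T x|
      ≤ ∫⁻ x : Euc d, ∫⁻ y : Euc d,
          ENNReal.ofReal (p0 y * |gaussianKernel d T (x - y) - gaussianKernel d T x|) := by
        apply lintegral_mono
        intro x
        refine (ENNReal.ofReal_le_ofReal (hA1 x)).trans_eq ?_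
        rw [ofReal_integral_eq_lintegral_ofReal (diff_integrand_int hT hp0 x)]
        filter_upwards with y
        exact mul_nonneg (hp0.2.1 y) (abs_nonneg _)
    _ = ∫⁻ y : Euc d, ∫⁻ x : Euc d,
          ENNReal.ofReal (p0 y * |gaussianKernel d T (x - y) - gaussianKernel d T x|) := by
        apply lintegral_lintegral_swap
        apply Measurable.aemeasurable
        exact ((hp0.1.comp measurable_snd).mul
          (((gauss_cont hT).measurable.comp (measurable_fst.sub measurable_snd)).sub
            ((gauss_cont hT).measurable.comp measurable_fst)).abs).ennreal_ofReal
    _ ≤ ∫⁻ y : Euc d, ENNReal.ofReal (p0 y * (‖y‖ / Real.sqrt T)) := by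
        apply lintegral_mono
        intro y
        have hmeas : Measurable fun x : Euc d =>
            ENNReal.ofReal |gaussianKernel d T (x - y) - gaussianKernel d T x| :=
          (((gauss_cont hT).measurable.comp (measurable_id.sub measurable_const)).sub
            (gauss_cont hT).measurable).abs.ennreal_ofReal
        calc ∫⁻ x : Euc d,
              ENNReal.ofReal (p0 y * |gaussianKernel d T (x - y) - gaussianKernel d T x|)
            = ENNReal.ofReal (p0 y) * ∫⁻ x : Euc d,
              ENNReal.ofReal (|gaussianKernel d T (x - y) - gaussianKernel d T x|) := by
              simp_rw [ENNReal.ofReal_mul (hp0.2.1 y)]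
              rw [lintegral_const_mul _ hmeas]
          _ ≤ ENNReal.ofReal (p0 y) * ENNReal.ofReal (‖y‖ / Real.sqrt T) :=
              mul_le_mul_right (gauss_shift_lintegral hT y) _
          _ = ENNReal.ofReal (p0 y * (‖y‖ / Real.sqrt T)) :=
              (ENNReal.ofReal_mul (hp0.2.1 y)).symm
    _ = ENNReal.ofReal (∫ y : Euc d, p0 y * (‖y‖ / Real.sqrt T)) := by
        rw [ofReal_integral_eq_lintegral_ofReal]
        · apply Integrable.congr (hM1.div_const (Real.sqrt T))
          filter_upwards with y
          ring
        · filter_upwards with y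
          exact mul_nonneg (hp0.2.1 y) (div_nonneg (norm_nonneg y) hsT.le)
    _ = ENNReal.ofReal ((∫ z : Euc d, ‖z‖ * p0 z) / Real.sqrt T) := by
        congr 1
        rw [← integral_div]
        apply integral_congr_ae
        filter_upwards with y
        ring

end Aux

/-- Initialization error: `TV(p_T, φ_T) ≤ M₁/(2√T)` when `p_0` has finite first moment. -/
theorem stmt4 (d : ℕ) (hd : 1 ≤ d)
    (p0 : Euc d → ℝ) (hp0 : IsProbDensity p0)
    (hM1 : Integrable fun z : Euc d => ‖z‖ * p0 z)
    (T : ℝ) (hT : 0 < T) :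
    tvDist d (pt d p0 T) (gaussianKernel d T) ≤
      (∫ z, ‖z‖ * p0 z) / (2 * Real.sqrt T) := by
  have hsT : 0 < Real.sqrt T := Real.sqrt_pos.mpr hT
  have hM1nn : 0 ≤ ∫ z : Euc d, ‖z‖ * p0 z :=
    integral_nonneg fun z => mul_nonneg (norm_nonneg z) (hp0.2.1 z)
  have hmeas : AEStronglyMeasurable
      (fun x : Euc d => |pt d p0 T x - gaussianKernel d T x|) volume := by
    have h := ((Aux.pt_meas hT hp0).sub (Aux.gauss_cont hT).aestronglyMeasurable).norm
    apply h.congr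
    filter_upwards with x
    simp [Real.norm_eq_abs]
  have heq : ∫ x : Euc d, |pt d p0 T x - gaussianKernel d T x|
      = (∫⁻ x : Euc d, ENNReal.ofReal |pt d p0 T x - gaussianKernel d T x|).toReal :=
    integral_eq_lintegral_of_nonneg_ae (Filter.Eventually.of_forall fun x => abs_nonneg _) hmeas
  have hbound : ∫ x : Euc d, |pt d p0 T x - gaussianKernel d T x|
      ≤ (∫ z : Euc d, ‖z‖ * p0 z) / Real.sqrt T := by
    rw [heq]
    have := ENNReal.toReal_mono ENNReal.ofReal_ne_top (Aux.main_lintegral hT hp0 hM1)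
    refine this.trans_eq ?_
    rw [ENNReal.toReal_ofReal (div_nonneg hM1nn hsT.le)]
  unfold tvDist
  rw [show (∫ z : Euc d, ‖z‖ * p0 z) / (2 * Real.sqrt T)
      = (1/2) * ((∫ z : Euc d, ‖z‖ * p0 z) / Real.sqrt T) by ring]
  linarith
end
end

section
/- Let p_0 be a strictly positive, continuously differentiable probability density on ℝ^d with ∫ ‖∇p_0‖ < ∞, and suppose ∫ ‖∇ log p_0(x)‖^{2k} p_0(x) dx < ∞ for some k ≥ 1. Then for every t > 0, the diffused score s_t = ∇ log p_t satisfies the moment monotonicity ∫ ‖s_t(x)‖^{2k} p_t(x) dx ≤ ∫ ‖∇ log p_0(x)‖^{2k} p_0(x) dx. -/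
open MeasureTheory Real
open scoped BigOperators ENNReal

noncomputable section

section Basics
variable {d : ℕ} {t : ℝ} (ht : 0 < t)
include ht

omit ht in
lemma gk_eq (x : Euc d) :
    gaussianKernel d t x = (2 * π * t) ^ (-(d : ℝ) / 2) * rexp (-((2*t)⁻¹) * ‖x‖ ^ 2) := by
  rw [gaussianKernel]; ring_nf

lemma gk_pos (x : Euc d) : 0 < gaussianKernel d t x := by
  have h2πt : (0:ℝ) < 2 * π * t := by positivity
  exact mul_pos (rpow_pos_of_pos h2πt _) (exp_pos _)

lemma gk_le (x : Euc d) : gaussianKernel d t x ≤ (2 * π * t) ^ (-(d : ℝ) / 2) := by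
  have h2πt : (0:ℝ) < 2 * π * t := by positivity
  have : rexp (-‖x‖ ^ 2 / (2 * t)) ≤ 1 := by
    apply exp_le_one_iff.mpr
    have : (0:ℝ) ≤ ‖x‖^2 / (2*t) := by positivity
    linarith [neg_div (2*t) (‖x‖^2)]
  calc (2 * π * t) ^ (-(d : ℝ) / 2) * rexp (-‖x‖ ^ 2 / (2 * t))
      ≤ (2 * π * t) ^ (-(d : ℝ) / 2) * 1 := by
        exact mul_le_mul_of_nonneg_left this (le_of_lt (rpow_pos_of_pos h2πt _))
    _ = _ := mul_one _

omit ht in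
lemma gk_cont : Continuous (gaussianKernel d t) := by
  unfold gaussianKernel
  fun_prop

lemma gk_integrable : Integrable (gaussianKernel d t) := by
  have hb : (0:ℝ) < (2*t)⁻¹ := by positivity
  have h1 : Integrable (fun x : Euc d => rexp (-((2*t)⁻¹) * ‖x‖ ^ 2)) := by
    have := GaussianFourier.integrable_cexp_neg_mul_sq_norm_add
      (V := Euc d) (b := ((2*t)⁻¹ : ℂ)) (by simpa using hb) 0 (0 : Euc d)
    have h2 := this.norm
    refine h2.congr ?_
    filter_upwards with x
    have : (-((2*(t:ℂ))⁻¹) * (‖x‖:ℂ) ^ 2 + 0 * ((inner ℝ (0 : Euc d) x : ℝ) : ℂ))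
        = ((-((2*t)⁻¹) * ‖x‖ ^ 2 : ℝ) : ℂ) := by push_cast; ring
    rw [this, Complex.norm_exp_ofReal]
  have h2 := h1.const_mul ((2 * π * t) ^ (-(d : ℝ) / 2))
  refine h2.congr ?_
  filter_upwards with x
  rw [gk_eq]

lemma gk_integral : ∫ x : Euc d, gaussianKernel d t x = 1 := by
  have hb : (0:ℝ) < (2*t)⁻¹ := by positivity
  have h2πt : (0:ℝ) < 2 * π * t := by positivity
  have h1 : ∫ x : Euc d, rexp (-((2*t)⁻¹) * ‖x‖ ^ 2) = (2 * π * t) ^ ((d:ℝ) / 2) := by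
    rw [GaussianFourier.integral_rexp_neg_mul_sq_norm hb, finrank_euclideanSpace_fin]
    have : π / ((2*t)⁻¹) = 2*π*t := by field_simp
    rw [this]
  have : ∫ x : Euc d, gaussianKernel d t x
      = (2 * π * t) ^ (-(d : ℝ) / 2) * ((2 * π * t) ^ ((d:ℝ) / 2)) := by
    simp_rw [gk_eq]
    rw [integral_const_mul, h1]
  rw [this, ← rpow_add h2πt]
  have : -(d:ℝ)/2 + (d:ℝ)/2 = 0 := by ring
  rw [this, rpow_zero]
end Basics

section Main
variable {d : ℕ} {t : ℝ} {p0 : Euc d → ℝ}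

lemma p0_integrable (hp0 : IsProbDensity p0) : Integrable p0 := by
  by_contra h
  have h0 := integral_undef h
  rw [hp0.2.2] at h0
  norm_num at h0

lemma gk_cont' {x : Euc d} : Continuous fun y : Euc d => gaussianKernel d t (x - y) :=
  gk_cont.comp (continuous_const.sub continuous_id)

lemma pt_integrand_integrable (ht : 0 < t) (hp0 : IsProbDensity p0) (x : Euc d) :
    Integrable (fun y => p0 y * gaussianKernel d t (x - y)) := by
  have h := (p0_integrable hp0).bdd_mul (c := (2 * π * t) ^ (-(d : ℝ) / 2)) ((gk_cont' (x := x)).aestronglyMeasurable)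
    (ae_of_all _ fun y => by
      rw [Real.norm_eq_abs, abs_of_pos (gk_pos ht _)]; exact gk_le ht _)
  simpa [mul_comm] using h

lemma pt_pos (ht : 0 < t) (hp0 : IsProbDensity p0) (hpos : ∀ x, 0 < p0 x) (x : Euc d) :
    0 < pt d p0 t x := by
  rw [pt]
  refine (integral_pos_iff_support_of_nonneg (fun y => ?_) (pt_integrand_integrable ht hp0 x)).mpr ?_
  · exact mul_nonneg (hp0.2.1 y) (gk_pos ht _).le
  · have : Function.support (fun y => p0 y * gaussianKernel d t (x - y)) = Set.univ := by
      refine Set.eq_univ_of_forall fun y => ?_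
      exact (mul_pos (hpos y) (gk_pos ht _)).ne'
    rw [this]
    exact isOpen_univ.measure_pos volume Set.univ_nonempty

lemma pt_cont (ht : 0 < t) (hp0 : IsProbDensity p0) : Continuous (pt d p0 t) := by
  refine continuous_of_dominated (F := fun x y => p0 y * gaussianKernel d t (x - y))
    (bound := fun y => (2 * π * t) ^ (-(d : ℝ) / 2) * p0 y) (fun x => ?_) (fun x => ?_) ?_ ?_
  · exact (hp0.1.aestronglyMeasurable.mul gk_cont'.aestronglyMeasurable)
  · filter_upwards with y
    rw [Real.norm_eq_abs, abs_of_nonneg (mul_nonneg (hp0.2.1 y) (gk_pos ht _).le), mul_comm]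
    exact mul_le_mul_of_nonneg_right (gk_le ht _) (hp0.2.1 y)
  · exact (p0_integrable hp0).const_mul _
  · filter_upwards with y
    exact continuous_const.mul (gk_cont.comp (continuous_id.sub continuous_const))

lemma norm_gradient_eq (f : Euc d → ℝ) (x : Euc d) : ‖gradient f x‖ = ‖fderiv ℝ f x‖ := by
  rw [gradient]
  exact LinearIsometryEquiv.norm_map _ _

lemma D_cont (hsmooth : ContDiff ℝ 1 p0) : Continuous fun y => fderiv ℝ p0 y :=
  hsmooth.continuous_fderiv one_ne_zero

lemma D_int (hsmooth : ContDiff ℝ 1 p0)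
    (hgradInt : Integrable fun x : Euc d => ‖gradient p0 x‖) :
    Integrable (fun y => fderiv ℝ p0 y) := by
  refine (integrable_norm_iff (D_cont hsmooth).aestronglyMeasurable).mp ?_
  exact hgradInt.congr (by filter_upwards with x using (norm_gradient_eq p0 x))

/-- The convolution `(∇p0) ⋆ φ_t` as a continuous-linear-map-valued function. -/
def Gconv (d : ℕ) (p0 : Euc d → ℝ) (t : ℝ) (x : Euc d) : Euc d →L[ℝ] ℝ :=
  ∫ y, gaussianKernel d t (x - y) • fderiv ℝ p0 y

lemma G_integrand_int (ht : 0 < t) (hsmooth : ContDiff ℝ 1 p0)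
    (hgradInt : Integrable fun x : Euc d => ‖gradient p0 x‖) (x : Euc d) :
    Integrable (fun y => gaussianKernel d t (x - y) • fderiv ℝ p0 y) := by
  refine Integrable.mono' (((D_int hsmooth hgradInt).norm).const_mul
    ((2 * π * t) ^ (-(d : ℝ) / 2))) (gk_cont'.aestronglyMeasurable.smul
      (D_cont hsmooth).aestronglyMeasurable) ?_
  filter_upwards with y
  rw [show ‖gaussianKernel d t (x - y) • fderiv ℝ p0 y‖ = ‖gaussianKernel d t (x - y)‖ * ‖fderiv ℝ p0 y‖ from norm_smul _ _, Real.norm_eq_abs, abs_of_pos (gk_pos ht _)]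
  exact mul_le_mul_of_nonneg_right (gk_le ht _) (norm_nonneg _)

lemma G_cont (ht : 0 < t) (hsmooth : ContDiff ℝ 1 p0)
    (hgradInt : Integrable fun x : Euc d => ‖gradient p0 x‖) :
    Continuous (Gconv d p0 t) := by
  refine continuous_of_dominated (F := fun x y => gaussianKernel d t (x - y) • fderiv ℝ p0 y)
    (bound := fun y => (2 * π * t) ^ (-(d : ℝ) / 2) * ‖fderiv ℝ p0 y‖) (fun x =>
      gk_cont'.aestronglyMeasurable.smul (D_cont hsmooth).aestronglyMeasurable)
    (fun x => ?_) (((D_int hsmooth hgradInt).norm).const_mul _) ?_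
  · filter_upwards with y
    rw [show ‖gaussianKernel d t (x - y) • fderiv ℝ p0 y‖ = ‖gaussianKernel d t (x - y)‖ * ‖fderiv ℝ p0 y‖ from norm_smul _ _, Real.norm_eq_abs, abs_of_pos (gk_pos ht _)]
    exact mul_le_mul_of_nonneg_right (gk_le ht _) (norm_nonneg _)
  · filter_upwards with y
    exact ((gk_cont.comp (continuous_id.sub continuous_const)).smul continuous_const)

lemma G_norm_le (ht : 0 < t) (hsmooth : ContDiff ℝ 1 p0)
    (hgradInt : Integrable fun x : Euc d => ‖gradient p0 x‖) (x : Euc d) :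
    ‖Gconv d p0 t x‖ ≤ ∫ y, gaussianKernel d t (x - y) * ‖fderiv ℝ p0 y‖ := by
  refine (norm_integral_le_integral_norm _).trans_eq (integral_congr_ae ?_)
  filter_upwards with y
  rw [show ‖gaussianKernel d t (x - y) • fderiv ℝ p0 y‖ = ‖gaussianKernel d t (x - y)‖ * ‖fderiv ℝ p0 y‖ from norm_smul _ _, Real.norm_eq_abs, abs_of_pos (gk_pos ht _)]

end Main

section Deriv
variable {d : ℕ} {t : ℝ} {p0 : Euc d → ℝ}

lemma pt_shift_int (ht : 0 < t) (hp0 : IsProbDensity p0) (c : Euc d) :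
    Integrable fun z : Euc d => p0 (c - z) * gaussianKernel d t z := by
  have h := (integrable_comp_sub_left (fun y => p0 y * gaussianKernel d t (c - y)) c).mpr
    (pt_integrand_integrable ht hp0 c)
  refine h.congr ?_
  filter_upwards with z
  rw [sub_sub_cancel]

lemma pt_shift_eq (c : Euc d) :
    pt d p0 t c = ∫ z : Euc d, p0 (c - z) * gaussianKernel d t z := by
  rw [pt, ← integral_sub_left_eq_self (fun y => p0 y * gaussianKernel d t (c - y)) volume c]
  refine integral_congr_ae ?_
  filter_upwards with z
  rw [sub_sub_cancel]

lemma ftc_p0 (hsmooth : ContDiff ℝ 1 p0) (w v : Euc d) :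
    p0 (w + v) - p0 w = ∫ s in (0:ℝ)..1, (fderiv ℝ p0 (w + s • v)) v := by
  have hcurve : ∀ s : ℝ, HasDerivAt (fun s : ℝ => w + s • v) v s := by
    intro s
    simpa using ((hasDerivAt_id s).smul_const v).const_add w
  have hderiv : ∀ s ∈ Set.uIcc (0:ℝ) 1,
      HasDerivAt (fun s : ℝ => p0 (w + s • v)) ((fderiv ℝ p0 (w + s • v)) v) s := by
    intro s _
    exact ((hsmooth.differentiable one_ne_zero).differentiableAt.hasFDerivAt.comp_hasDerivAt s
      (hcurve s))
  have hint : IntervalIntegrable (fun s : ℝ => (fderiv ℝ p0 (w + s • v)) v) volume 0 1 := by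
    apply Continuous.intervalIntegrable
    exact ((D_cont hsmooth).comp (by continuity)).clm_apply continuous_const
  have := intervalIntegral.integral_eq_sub_of_hasDerivAt hderiv hint
  rw [this]
  norm_num

lemma inner_swap_eq (ht : 0 < t) (hsmooth : ContDiff ℝ 1 p0)
    (hgradInt : Integrable fun x : Euc d => ‖gradient p0 x‖) (c v : Euc d) :
    ∫ z : Euc d, (fderiv ℝ p0 (c - z)) v * gaussianKernel d t z = (Gconv d p0 t c) v := by
  have h1 : (Gconv d p0 t c) v = ∫ y, gaussianKernel d t (c - y) * (fderiv ℝ p0 y) v := by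
    rw [Gconv, ContinuousLinearMap.integral_apply (G_integrand_int ht hsmooth hgradInt c)]
    refine integral_congr_ae ?_
    filter_upwards with y
    simp
  rw [h1, ← integral_sub_left_eq_self (fun y => gaussianKernel d t (c - y) * (fderiv ℝ p0 y) v)
    volume c]
  refine integral_congr_ae ?_
  filter_upwards with z
  rw [sub_sub_cancel, mul_comm]

lemma key_identity (ht : 0 < t) (hp0 : IsProbDensity p0) (hsmooth : ContDiff ℝ 1 p0)
    (hgradInt : Integrable fun x : Euc d => ‖gradient p0 x‖) (x v : Euc d) :
    pt d p0 t (x + v) - pt d p0 t x = ∫ s in (0:ℝ)..1, (Gconv d p0 t (x + s • v)) v := by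
  classical
  set φ := gaussianKernel d t with hφ
  set D := fun y => fderiv ℝ p0 y with hD
  set ct : ℝ := (2 * π * t) ^ (-(d : ℝ) / 2) with hct
  -- Step 1: difference as single integral
  have h1 : pt d p0 t (x + v) - pt d p0 t x
      = ∫ z : Euc d, (p0 (x + v - z) - p0 (x - z)) * φ z := by
    rw [pt_shift_eq (x + v), pt_shift_eq x, ← integral_sub (pt_shift_int ht hp0 (x+v))
      (pt_shift_int ht hp0 x)]
    refine integral_congr_ae ?_
    filter_upwards with z
    ring
  -- Step 2: FTC inside
  have h2 : ∀ z : Euc d, (p0 (x + v - z) - p0 (x - z)) * φ z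
      = ∫ s in (0:ℝ)..1, (D (x - z + s • v)) v * φ z := by
    intro z
    have hw : x - z + v = x + v - z := by abel
    have := ftc_p0 hsmooth (x - z) v
    rw [hw] at this
    rw [this, intervalIntegral.integral_mul_const]
  -- the product-space function
  set F : ℝ × Euc d → ℝ := fun q => (D (x - q.2 + q.1 • v)) v * φ q.2 with hF
  have hFcont : Continuous F := by
    apply Continuous.mul
    · exact ((D_cont hsmooth).comp (by fun_prop)).clm_apply continuous_const
    · exact gk_cont.comp continuous_snd
  -- integrability on the product
  have hm : ∀ s : ℝ, Integrable (fun z : Euc d => ‖D ((x + s • v) - z)‖) := by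
    intro s
    exact (integrable_comp_sub_left (fun y => ‖D y‖) (x + s • v)).mpr
      ((D_int hsmooth hgradInt).norm)
  have hbnd : ∀ s : ℝ, ∀ z : Euc d, ‖F (s, z)‖ ≤ (ct * ‖v‖) * ‖D ((x + s • v) - z)‖ := by
    intro s z
    have harg : x - z + s • v = (x + s • v) - z := by abel
    rw [hF]
    simp only [harg]
    calc ‖(D ((x + s • v) - z)) v * φ z‖
        = ‖(D ((x + s • v) - z)) v‖ * ‖φ z‖ := norm_mul _ _
      _ ≤ (‖D ((x + s • v) - z)‖ * ‖v‖) * ct := by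
          apply mul_le_mul (ContinuousLinearMap.le_opNorm _ _) ?_ (norm_nonneg _)
            (by positivity)
          rw [Real.norm_eq_abs, abs_of_pos (gk_pos ht z)]
          exact gk_le ht z
      _ = (ct * ‖v‖) * ‖D ((x + s • v) - z)‖ := by ring
  have hFint : Integrable F ((volume.restrict (Set.Ioc (0:ℝ) 1)).prod volume) := by
    rw [integrable_prod_iff hFcont.aestronglyMeasurable]
    constructor
    · filter_upwards with s
      exact Integrable.mono' (((hm s).const_mul (ct * ‖v‖)))
        (hFcont.comp (Continuous.prodMk_right s)).aestronglyMeasurable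
        (ae_of_all _ fun z => hbnd s z)
    · set M : ℝ := ∫ y : Euc d, ‖D y‖ with hM
      refine Integrable.mono' (g := fun _ : ℝ => (ct * ‖v‖) * M)
        ((integrableOn_const_iff).mpr (Or.inr (by simp)))
        hFcont.norm.aestronglyMeasurable.integral_prod_right' ?_
      filter_upwards with s
      have hnn : 0 ≤ ∫ z : Euc d, ‖F (s, z)‖ := integral_nonneg fun z => norm_nonneg _
      rw [Real.norm_eq_abs, abs_of_nonneg hnn]
      have hle : ∫ z : Euc d, ‖F (s, z)‖ ≤ ∫ z : Euc d, (ct * ‖v‖) * ‖D ((x + s • v) - z)‖ := by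
        refine integral_mono_of_nonneg (ae_of_all _ fun z => norm_nonneg _)
          ((hm s).const_mul _) (ae_of_all _ fun z => hbnd s z)
      refine hle.trans ?_
      rw [integral_const_mul, integral_sub_left_eq_self (fun y => ‖D y‖) volume (x + s • v)]
  -- swap the integrals
  have h3 : pt d p0 t (x + v) - pt d p0 t x
      = ∫ s in Set.Ioc (0:ℝ) 1, ∫ z : Euc d, F (s, z) := by
    rw [h1]
    have : ∫ z : Euc d, (p0 (x + v - z) - p0 (x - z)) * φ z
        = ∫ z : Euc d, ∫ s in Set.Ioc (0:ℝ) 1, F (s, z) := by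
      refine integral_congr_ae (ae_of_all _ fun z => ?_)
      show (p0 (x + v - z) - p0 (x - z)) * φ z = ∫ s in Set.Ioc (0:ℝ) 1, F (s, z)
      rw [h2 z, intervalIntegral.integral_of_le zero_le_one]
    rw [this]
    exact (integral_integral_swap hFint).symm
  -- evaluate the inner integral
  have h4 : ∀ s : ℝ, ∫ z : Euc d, F (s, z) = (Gconv d p0 t (x + s • v)) v := by
    intro s
    have : ∀ z : Euc d, F (s, z) = (D ((x + s • v) - z)) v * φ z := by
      intro z
      have harg : x - z + s • v = (x + s • v) - z := by abel
      rw [hF]; simp only [harg]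
    rw [integral_congr_ae (ae_of_all _ this)]
    exact inner_swap_eq ht hsmooth hgradInt (x + s • v) v
  rw [h3, intervalIntegral.integral_of_le zero_le_one]
  exact setIntegral_congr_ae measurableSet_Ioc (ae_of_all _ fun s _ => h4 s)
end Deriv

section Deriv2
variable {d : ℕ} {t : ℝ} {p0 : Euc d → ℝ}

lemma clm_norm_smul (c : ℝ) (L : Euc d →L[ℝ] ℝ) : ‖c • L‖ = ‖c‖ * ‖L‖ := norm_smul c L
lemma euc_norm_smul (c : ℝ) (w : Euc d) : ‖c • w‖ = ‖c‖ * ‖w‖ := norm_smul c w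

lemma hasFDerivAt_pt (ht : 0 < t) (hp0 : IsProbDensity p0) (hsmooth : ContDiff ℝ 1 p0)
    (hgradInt : Integrable fun x : Euc d => ‖gradient p0 x‖) (x : Euc d) :
    HasFDerivAt (pt d p0 t) (Gconv d p0 t x) x := by
  rw [hasFDerivAt_iff_isLittleO_nhds_zero, Asymptotics.isLittleO_iff]
  intro c hc
  have hGc : ContinuousAt (Gconv d p0 t) x := (G_cont ht hsmooth hgradInt).continuousAt
  rw [Metric.continuousAt_iff] at hGc
  obtain ⟨δ, hδ, hball⟩ := hGc c hc
  rw [Metric.eventually_nhds_iff]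
  refine ⟨δ, hδ, fun v hv => ?_⟩
  have hvx : ‖v‖ < δ := by simpa [dist_eq_norm] using hv
  have hGint : ∀ u : Euc d, IntervalIntegrable (fun s : ℝ => (Gconv d p0 t (x + s • u)) u)
      volume 0 1 := by
    intro u
    apply Continuous.intervalIntegrable
    exact (((G_cont ht hsmooth hgradInt).comp (by continuity)).clm_apply continuous_const)
  have hid : pt d p0 t (x + v) - pt d p0 t x - (Gconv d p0 t x) v
      = ∫ s in (0:ℝ)..1, ((Gconv d p0 t (x + s • v)) v - (Gconv d p0 t x) v) := by
    rw [key_identity ht hp0 hsmooth hgradInt x v,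
      intervalIntegral.integral_sub (hGint v) intervalIntegrable_const,
      intervalIntegral.integral_const]
    norm_num
  rw [hid]
  have hbound : ∀ s ∈ Set.uIoc (0:ℝ) 1,
      ‖(Gconv d p0 t (x + s • v)) v - (Gconv d p0 t x) v‖ ≤ c * ‖v‖ := by
    intro s hs
    rw [Set.uIoc_of_le zero_le_one] at hs
    have h0s : 0 < s := hs.1
    have hs1 : s ≤ 1 := hs.2
    have hdist : dist (x + s • v) x < δ := by
      rw [dist_eq_norm]
      have : ‖x + s • v - x‖ = |s| * ‖v‖ := by
        rw [add_sub_cancel_left, norm_smul, Real.norm_eq_abs]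
      rw [this, abs_of_pos h0s]
      calc s * ‖v‖ ≤ 1 * ‖v‖ := mul_le_mul_of_nonneg_right hs1 (norm_nonneg _)
        _ = ‖v‖ := one_mul _
        _ < δ := hvx
    have hG := hball hdist
    rw [dist_eq_norm] at hG
    calc ‖(Gconv d p0 t (x + s • v)) v - (Gconv d p0 t x) v‖
        = ‖(Gconv d p0 t (x + s • v) - Gconv d p0 t x) v‖ := by
          rw [ContinuousLinearMap.sub_apply]
      _ ≤ ‖Gconv d p0 t (x + s • v) - Gconv d p0 t x‖ * ‖v‖ :=
          ContinuousLinearMap.le_opNorm _ _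
      _ ≤ c * ‖v‖ := mul_le_mul_of_nonneg_right hG.le (norm_nonneg _)
  have := intervalIntegral.norm_integral_le_of_norm_le_const hbound
  simpa using this

lemma grad_logpt_norm (ht : 0 < t) (hp0 : IsProbDensity p0) (hpos : ∀ x, 0 < p0 x)
    (hsmooth : ContDiff ℝ 1 p0)
    (hgradInt : Integrable fun x : Euc d => ‖gradient p0 x‖) (x : Euc d) :
    ‖gradient (fun y => Real.log (pt d p0 t y)) x‖
      = (pt d p0 t x)⁻¹ * ‖Gconv d p0 t x‖ := by
  have hlog : HasFDerivAt (fun y => Real.log (pt d p0 t y))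
      ((pt d p0 t x)⁻¹ • Gconv d p0 t x) x := by
    have h1 := hasFDerivAt_pt ht hp0 hsmooth hgradInt x
    have h2 := (Real.hasDerivAt_log (pt_pos ht hp0 hpos x).ne').comp_hasFDerivAt x h1
    exact h2
  rw [gradient, hlog.fderiv, _root_.map_smul, euc_norm_smul, Real.norm_eq_abs,
    abs_of_pos (inv_pos.mpr (pt_pos ht hp0 hpos x)), LinearIsometryEquiv.norm_map]

lemma grad_logp0_norm (hpos : ∀ x, 0 < p0 x) (hsmooth : ContDiff ℝ 1 p0) (y : Euc d) :
    ‖fderiv ℝ p0 y‖ = ‖gradient (fun z => Real.log (p0 z)) y‖ * p0 y := by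
  have hlog : HasFDerivAt (fun z => Real.log (p0 z)) ((p0 y)⁻¹ • fderiv ℝ p0 y) y :=
    (Real.hasDerivAt_log (hpos y).ne').comp_hasFDerivAt y
      (hsmooth.differentiable one_ne_zero).differentiableAt.hasFDerivAt
  have hg : ‖gradient (fun z => Real.log (p0 z)) y‖ = (p0 y)⁻¹ * ‖fderiv ℝ p0 y‖ := by
    rw [gradient, hlog.fderiv, _root_.map_smul, euc_norm_smul, Real.norm_eq_abs,
      abs_of_pos (inv_pos.mpr (hpos y)), LinearIsometryEquiv.norm_map]
  rw [hg, inv_mul_eq_div, div_mul_cancel₀ _ (hpos y).ne']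

lemma score_bound (ht : 0 < t) (hp0 : IsProbDensity p0) (hpos : ∀ x, 0 < p0 x)
    (hsmooth : ContDiff ℝ 1 p0)
    (hgradInt : Integrable fun x : Euc d => ‖gradient p0 x‖) (x : Euc d) :
    ‖gradient (fun y => Real.log (pt d p0 t y)) x‖
      ≤ (pt d p0 t x)⁻¹
        * ∫ y, ‖gradient (fun z => Real.log (p0 z)) y‖ * p0 y * gaussianKernel d t (x - y) := by
  rw [grad_logpt_norm ht hp0 hpos hsmooth hgradInt x]
  refine mul_le_mul_of_nonneg_left ?_ (inv_pos.mpr (pt_pos ht hp0 hpos x)).le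
  refine (G_norm_le ht hsmooth hgradInt x).trans_eq ?_
  refine integral_congr_ae (ae_of_all _ fun y => ?_)
  show gaussianKernel d t (x - y) * ‖fderiv ℝ p0 y‖ = _
  rw [grad_logp0_norm hpos hsmooth y]
  ring

lemma score_integrand_int (ht : 0 < t) (hpos : ∀ x, 0 < p0 x) (hsmooth : ContDiff ℝ 1 p0)
    (hgradInt : Integrable fun x : Euc d => ‖gradient p0 x‖) (x : Euc d) :
    Integrable (fun y =>
      ‖gradient (fun z => Real.log (p0 z)) y‖ * p0 y * gaussianKernel d t (x - y)) := by
  refine (G_integrand_int ht hsmooth hgradInt x).norm.congr ?_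
  filter_upwards with y
  have h := grad_logp0_norm hpos hsmooth y
  calc ‖gaussianKernel d t (x - y) • fderiv ℝ p0 y‖
      = ‖gaussianKernel d t (x - y)‖ * ‖fderiv ℝ p0 y‖ := clm_norm_smul _ _
    _ = gaussianKernel d t (x - y) * ‖fderiv ℝ p0 y‖ := by
        rw [Real.norm_eq_abs, abs_of_pos (gk_pos ht _)]
    _ = gaussianKernel d t (x - y)
        * (‖gradient (fun z => Real.log (p0 z)) y‖ * p0 y) :=
        congrArg (fun r => gaussianKernel d t (x - y) * r) h
    _ = ‖gradient (fun z => Real.log (p0 z)) y‖ * p0 y * gaussianKernel d t (x - y) := by ring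
end Deriv2

section Jensen
variable {d : ℕ} {t : ℝ} {p0 : Euc d → ℝ}

lemma g0_cont (hpos : ∀ x, 0 < p0 x) (hsmooth : ContDiff ℝ 1 p0) :
    Continuous fun y : Euc d => ‖gradient (fun z => Real.log (p0 z)) y‖ := by
  have h : ∀ y : Euc d, ‖fderiv ℝ p0 y‖ / p0 y
      = ‖gradient (fun z => Real.log (p0 z)) y‖ := by
    intro y
    rw [grad_logp0_norm hpos hsmooth y, mul_div_cancel_right₀ _ (hpos y).ne']
  exact Continuous.congr
    (((D_cont hsmooth).norm).div (hsmooth.continuous) fun y => (hpos y).ne') h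

lemma pointwise_jensen (ht : 0 < t) (hp0 : IsProbDensity p0) (hpos : ∀ x, 0 < p0 x)
    (hsmooth : ContDiff ℝ 1 p0)
    (hgradInt : Integrable fun x : Euc d => ‖gradient p0 x‖)
    {k : ℕ} (hk : 1 ≤ k) (x : Euc d) :
    (ENNReal.ofReal ‖gradient (fun y => Real.log (pt d p0 t y)) x‖) ^ ((2*k : ℕ) : ℝ)
        * ENNReal.ofReal (pt d p0 t x)
      ≤ ∫⁻ y, (ENNReal.ofReal ‖gradient (fun z => Real.log (p0 z)) y‖) ^ ((2*k : ℕ) : ℝ)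
          * ENNReal.ofReal (p0 y * gaussianKernel d t (x - y)) := by
  classical
  set g0 : Euc d → ℝ := fun y => ‖gradient (fun z => Real.log (p0 z)) y‖ with hg0
  set f : Euc d → ℝ≥0∞ := fun y => ENNReal.ofReal (g0 y) with hf
  set ν : Measure (Euc d) :=
    volume.withDensity (fun y => ENNReal.ofReal (p0 y * gaussianKernel d t (x - y))) with hν
  set P : ℝ≥0∞ := ENNReal.ofReal (pt d p0 t x) with hP
  set p : ℝ := ((2*k : ℕ) : ℝ) with hp
  have hptpos := pt_pos ht hp0 hpos x
  have hP0 : P ≠ 0 := by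
    simp only [hP, ne_eq, ENNReal.ofReal_eq_zero, not_le]
    exact hptpos
  have hPtop : P ≠ ⊤ := ENNReal.ofReal_ne_top
  have hdens_meas : Measurable fun y => ENNReal.ofReal (p0 y * gaussianKernel d t (x - y)) :=
    ENNReal.measurable_ofReal.comp (hp0.1.mul (gk_cont'.measurable))
  have hf_meas : Measurable f :=
    ENNReal.measurable_ofReal.comp (g0_cont hpos hsmooth).measurable
  have hp1 : (1:ℝ) < p := by
    rw [hp]
    have : (2:ℕ) ≤ 2*k := by omega
    exact_mod_cast by omega
  have hp_pos : (0:ℝ) < p := lt_trans one_pos hp1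
  -- the total mass of ν is P
  have hνuniv : ν Set.univ = P := by
    rw [hν, withDensity_apply _ MeasurableSet.univ, Measure.restrict_univ, hP, pt,
      ← ofReal_integral_eq_lintegral_ofReal (pt_integrand_integrable ht hp0 x)
        (ae_of_all _ fun y => mul_nonneg (hp0.2.1 y) (gk_pos ht _).le)]
  -- lintegrals over ν as lintegrals over volume
  have hlint : ∀ h : Euc d → ℝ≥0∞, Measurable h → ∫⁻ y, h y ∂ν
      = ∫⁻ y, h y * ENNReal.ofReal (p0 y * gaussianKernel d t (x - y)) := by
    intro h hh
    rw [hν, lintegral_withDensity_eq_lintegral_mul _ hdens_meas hh]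
    exact lintegral_congr fun y => mul_comm _ _
  -- A = ∫⁻ f dν equals ofReal of the real integral
  set A : ℝ≥0∞ := ∫⁻ y, f y ∂ν with hA
  have hA_eq : A = ENNReal.ofReal
      (∫ y, g0 y * p0 y * gaussianKernel d t (x - y)) := by
    have hptw : ∀ y : Euc d, f y * ENNReal.ofReal (p0 y * gaussianKernel d t (x - y))
        = ENNReal.ofReal (g0 y * p0 y * gaussianKernel d t (x - y)) := by
      intro y
      rw [hf, ← ENNReal.ofReal_mul (norm_nonneg _), mul_assoc]
    rw [hA, hlint f hf_meas, lintegral_congr hptw,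
      ← ofReal_integral_eq_lintegral_ofReal (score_integrand_int ht hpos hsmooth hgradInt x)
        (ae_of_all _ fun y =>
          mul_nonneg (mul_nonneg (norm_nonneg _) (hp0.2.1 y)) (gk_pos ht _).le)]
  -- Hölder's inequality
  set q : ℝ := p / (p - 1) with hq
  have hconj : p.HolderConjugate q := Real.HolderConjugate.conjExponent hp1
  set B : ℝ≥0∞ := ∫⁻ y, f y ^ p ∂ν with hB
  have hAB : A ≤ B ^ (1/p) * P ^ (1/q) := by
    have h := ENNReal.lintegral_mul_le_Lp_mul_Lq ν hconj hf_meas.aemeasurable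
      (aemeasurable_const (b := (1:ℝ≥0∞)))
    simpa [lintegral_one, hνuniv, ENNReal.one_rpow] using h
  -- the score bound in ℝ≥0∞
  set N : ℝ≥0∞ := ENNReal.ofReal ‖gradient (fun y => Real.log (pt d p0 t y)) x‖ with hN
  have hNle : N ≤ P⁻¹ * A := by
    rw [hN, hA_eq, hP, ← ENNReal.ofReal_inv_of_pos hptpos, ← ENNReal.ofReal_mul
      (inv_nonneg.mpr hptpos.le)]
    exact ENNReal.ofReal_le_ofReal (score_bound ht hp0 hpos hsmooth hgradInt x)
  -- exponent arithmetic
  have hqinv : 1/q = (p-1)/p := by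
    rw [hq]; field_simp
  have hpq1 : (1/p) * p = 1 := by field_simp
  have hqp : (1/q) * p = p - 1 := by rw [hqinv]; field_simp
  have hPp_ne0 : P ^ p ≠ 0 := by
    simp [ENNReal.rpow_eq_zero_iff, hP0, hPtop, hp_pos, hp_pos.not_gt, not_lt.mpr hp_pos.le]
  have hPp_netop : P ^ p ≠ ⊤ := ENNReal.rpow_ne_top_of_nonneg hp_pos.le hPtop
  -- main estimate
  have hmain : N ^ p * P ≤ B := by
    calc N ^ p * P ≤ (P⁻¹ * A) ^ p * P :=
          mul_le_mul_left (ENNReal.rpow_le_rpow hNle hp_pos.le) P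
      _ ≤ (P⁻¹ * (B ^ (1/p) * P ^ (1/q))) ^ p * P :=
          mul_le_mul_left (ENNReal.rpow_le_rpow (mul_le_mul_right hAB _) hp_pos.le) P
      _ = (P⁻¹) ^ p * ((B ^ (1/p)) ^ p * (P ^ (1/q)) ^ p) * P := by
          rw [ENNReal.mul_rpow_of_nonneg _ _ hp_pos.le,
            ENNReal.mul_rpow_of_nonneg _ _ hp_pos.le]
      _ = (P ^ p)⁻¹ * (B * P ^ (p-1)) * P := by
          rw [ENNReal.inv_rpow, ← ENNReal.rpow_mul, ← ENNReal.rpow_mul, hpq1, hqp,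
            ENNReal.rpow_one]
      _ = B * ((P ^ p)⁻¹ * (P ^ (p-1) * P ^ (1:ℝ))) := by
          rw [ENNReal.rpow_one]; ring
      _ = B * ((P ^ p)⁻¹ * P ^ p) := by
          rw [← ENNReal.rpow_add _ _ hP0 hPtop]
          norm_num
      _ = B := by
          rw [ENNReal.inv_mul_cancel hPp_ne0 hPp_netop, mul_one]
  -- conclude
  have hBvol : B = ∫⁻ y, f y ^ p * ENNReal.ofReal (p0 y * gaussianKernel d t (x - y)) :=
    hlint (fun y => f y ^ p) (hf_meas.pow_const p)
  calc N ^ p * P ≤ B := hmain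
    _ = _ := hBvol
end Jensen

section Final
variable {d : ℕ} {t : ℝ} {p0 : Euc d → ℝ}

lemma tonelli_step (ht : 0 < t) (hp0 : IsProbDensity p0) (hpos : ∀ x, 0 < p0 x)
    (hsmooth : ContDiff ℝ 1 p0) (k : ℕ) :
    ∫⁻ x, ∫⁻ y, (ENNReal.ofReal ‖gradient (fun z => Real.log (p0 z)) y‖) ^ ((2*k : ℕ) : ℝ)
        * ENNReal.ofReal (p0 y * gaussianKernel d t (x - y))
      = ∫⁻ y, (ENNReal.ofReal ‖gradient (fun z => Real.log (p0 z)) y‖) ^ ((2*k : ℕ) : ℝ)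
        * ENNReal.ofReal (p0 y) := by
  classical
  set g0 : Euc d → ℝ := fun y => ‖gradient (fun z => Real.log (p0 z)) y‖ with hg0
  set p : ℝ := ((2*k : ℕ) : ℝ) with hp
  have hsplit : ∀ x y : Euc d, (ENNReal.ofReal (g0 y)) ^ p
        * ENNReal.ofReal (p0 y * gaussianKernel d t (x - y))
      = ((ENNReal.ofReal (g0 y)) ^ p * ENNReal.ofReal (p0 y))
        * ENNReal.ofReal (gaussianKernel d t (x - y)) := by
    intro x y
    rw [ENNReal.ofReal_mul (hp0.2.1 y), mul_assoc]
  have h1 : ∀ x : Euc d, ∫⁻ y, (ENNReal.ofReal (g0 y)) ^ p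
        * ENNReal.ofReal (p0 y * gaussianKernel d t (x - y))
      = ∫⁻ y, ((ENNReal.ofReal (g0 y)) ^ p * ENNReal.ofReal (p0 y))
        * ENNReal.ofReal (gaussianKernel d t (x - y)) := by
    intro x
    exact lintegral_congr fun y => hsplit x y
  refine (lintegral_congr h1).trans ?_
  -- swap
  have hGm : Measurable fun q : Euc d × Euc d =>
      ((ENNReal.ofReal (g0 q.2)) ^ p * ENNReal.ofReal (p0 q.2))
        * ENNReal.ofReal (gaussianKernel d t (q.1 - q.2)) := by
    refine Measurable.mul (Measurable.mul ?_ ?_) ?_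
    · exact (ENNReal.measurable_ofReal.comp
        ((g0_cont hpos hsmooth).measurable.comp measurable_snd)).pow_const p
    · exact ENNReal.measurable_ofReal.comp (hp0.1.comp measurable_snd)
    · exact ENNReal.measurable_ofReal.comp
        (gk_cont.measurable.comp (measurable_fst.sub measurable_snd))
  rw [lintegral_lintegral_swap hGm.aemeasurable]
  refine lintegral_congr fun y => ?_
  have hgm : Measurable fun x : Euc d => ENNReal.ofReal (gaussianKernel d t (x - y)) :=
    ((gk_cont.comp (continuous_id.sub continuous_const)).measurable).ennreal_ofReal
  rw [lintegral_const_mul _ hgm]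
  have hshift : ∫⁻ x, ENNReal.ofReal (gaussianKernel d t (x - y))
      = ∫⁻ z, ENNReal.ofReal (gaussianKernel d t z) :=
    lintegral_sub_right_eq_self (fun z => ENNReal.ofReal (gaussianKernel d t z)) y
  rw [hshift, ← ofReal_integral_eq_lintegral_ofReal (gk_integrable ht)
    (ae_of_all _ fun z => (gk_pos ht z).le), gk_integral ht]
  simp [hg0, ofReal_norm]

theorem aux_stmt8 (d : ℕ) (hd : 1 ≤ d) (p0 : Euc d → ℝ) (hp0 : IsProbDensity p0)
    (hpos : ∀ x, 0 < p0 x) (hsmooth : ContDiff ℝ 1 p0)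
    (hgradInt : Integrable fun x : Euc d => ‖gradient p0 x‖)
    (k : ℕ) (hk : 1 ≤ k)
    (hmom : Integrable fun x : Euc d =>
      ‖gradient (fun y => Real.log (p0 y)) x‖ ^ (2 * k) * p0 x)
    (t : ℝ) (ht : 0 < t) :
    (∫ x, ‖gradient (fun y => Real.log (pt d p0 t y)) x‖ ^ (2 * k) * pt d p0 t x) ≤
      ∫ x, ‖gradient (fun y => Real.log (p0 y)) x‖ ^ (2 * k) * p0 x := by
  classical
  set S : Euc d → ℝ := fun x => ‖gradient (fun y => Real.log (pt d p0 t y)) x‖ ^ (2 * k)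
    * pt d p0 t x with hS
  set S0 : Euc d → ℝ := fun x => ‖gradient (fun y => Real.log (p0 y)) x‖ ^ (2 * k) * p0 x
    with hS0
  have hS_nonneg : ∀ x, 0 ≤ S x := fun x =>
    mul_nonneg (pow_nonneg (norm_nonneg _) _) (pt_pos ht hp0 hpos x).le
  have hS0_nonneg : ∀ x, 0 ≤ S0 x := fun x =>
    mul_nonneg (pow_nonneg (norm_nonneg _) _) (hpos x).le
  have hS_cont : Continuous S := by
    refine Continuous.congr (f := fun x => ((pt d p0 t x)⁻¹ * ‖Gconv d p0 t x‖) ^ (2 * k)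
      * pt d p0 t x) ?_ ?_
    · exact (((pt_cont ht hp0).inv₀ fun x => (pt_pos ht hp0 hpos x).ne').mul
        (G_cont ht hsmooth hgradInt).norm).pow _ |>.mul (pt_cont ht hp0)
    · intro x
      simp only [hS]
      rw [grad_logpt_norm ht hp0 hpos hsmooth hgradInt x]
  have hS0_meas : AEStronglyMeasurable S0 volume := by
    refine Measurable.aestronglyMeasurable ?_
    exact (((g0_cont hpos hsmooth).measurable.pow_const _).mul hp0.1)
  -- convert both sides to lintegrals
  have hLHS : ∫ x, S x = (∫⁻ x, ENNReal.ofReal (S x)).toReal :=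
    integral_eq_lintegral_of_nonneg_ae (ae_of_all _ hS_nonneg) hS_cont.aestronglyMeasurable
  have hRHS : ∫ x, S0 x = (∫⁻ x, ENNReal.ofReal (S0 x)).toReal :=
    integral_eq_lintegral_of_nonneg_ae (ae_of_all _ hS0_nonneg) hS0_meas
  -- pointwise rewriting of ofReal S
  have hofS : ∀ x, ENNReal.ofReal (S x)
      = (ENNReal.ofReal ‖gradient (fun y => Real.log (pt d p0 t y)) x‖) ^ ((2*k : ℕ) : ℝ)
        * ENNReal.ofReal (pt d p0 t x) := by
    intro x
    rw [hS, ENNReal.ofReal_mul (pow_nonneg (norm_nonneg _) _),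
      ENNReal.ofReal_pow (norm_nonneg _), ← ENNReal.rpow_natCast]
  have hofS0 : ∀ x, ENNReal.ofReal (S0 x)
      = (ENNReal.ofReal ‖gradient (fun y => Real.log (p0 y)) x‖) ^ ((2*k : ℕ) : ℝ)
        * ENNReal.ofReal (p0 x) := by
    intro x
    rw [hS0, ENNReal.ofReal_mul (pow_nonneg (norm_nonneg _) _),
      ENNReal.ofReal_pow (norm_nonneg _), ← ENNReal.rpow_natCast]
  -- the lintegral inequality
  have hmono : ∫⁻ x, ENNReal.ofReal (S x) ≤ ∫⁻ x, ENNReal.ofReal (S0 x) := by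
    calc ∫⁻ x, ENNReal.ofReal (S x)
        ≤ ∫⁻ x, ∫⁻ y, (ENNReal.ofReal ‖gradient (fun z => Real.log (p0 z)) y‖)
            ^ ((2*k : ℕ) : ℝ) * ENNReal.ofReal (p0 y * gaussianKernel d t (x - y)) := by
          refine lintegral_mono fun x => ?_
          rw [hofS x]
          exact pointwise_jensen ht hp0 hpos hsmooth hgradInt hk x
      _ = ∫⁻ y, (ENNReal.ofReal ‖gradient (fun z => Real.log (p0 z)) y‖) ^ ((2*k : ℕ) : ℝ)
            * ENNReal.ofReal (p0 y) := tonelli_step ht hp0 hpos hsmooth k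
      _ = ∫⁻ x, ENNReal.ofReal (S0 x) := by
          refine (lintegral_congr fun x => ?_).symm
          exact hofS0 x
  -- finiteness of the RHS
  have hfin : (∫⁻ x, ENNReal.ofReal (S0 x)) ≠ ⊤ := by
    have h1 : ∀ x, ENNReal.ofReal (S0 x) = (‖S0 x‖₊ : ℝ≥0∞) := by
      intro x
      rw [← enorm_eq_nnnorm, ← ofReal_norm_eq_enorm, Real.norm_eq_abs, abs_of_nonneg (hS0_nonneg x)]
    rw [lintegral_congr h1]
    exact hmom.2.ne
  rw [hLHS, hRHS]
  exact ENNReal.toReal_mono hfin hmono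
end Final


/-- Monotonicity of score moments along the Gaussian smoothing. -/
theorem stmt8 (d : ℕ) (hd : 1 ≤ d) (p0 : Euc d → ℝ) (hp0 : IsProbDensity p0)
    (hpos : ∀ x, 0 < p0 x) (hsmooth : ContDiff ℝ 1 p0)
    (hgradInt : Integrable fun x : Euc d => ‖gradient p0 x‖)
    (k : ℕ) (hk : 1 ≤ k)
    (hmom : Integrable fun x : Euc d =>
      ‖gradient (fun y => Real.log (p0 y)) x‖ ^ (2 * k) * p0 x)
    (t : ℝ) (ht : 0 < t) :
    (∫ x, ‖gradient (fun y => Real.log (pt d p0 t y)) x‖ ^ (2 * k) * pt d p0 t x) ≤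
      ∫ x, ‖gradient (fun y => Real.log (p0 y)) x‖ ^ (2 * k) * p0 x := by
  exact aux_stmt8 d hd p0 hp0 hpos hsmooth hgradInt k hk hmom t ht
end
end
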